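/- arXiv:2107.01479 — 3 statements merged into one kernel-verified Lean document; each statement's English description precedes it below -/
import Mathlib

section
/- Let N ≥ 2, b > 0, and 1 < p < 1 + 2b/(N−1). Then the Gagliardo–Nirenberg quotient is unbounded on H^1(ℝ^N): for every M > 0 there exists a nonzero radial function f ∈ H^1(ℝ^N) with ∫_{ℝ^N} |x|^b |f(x)|^{p+1} dx > M ‖f‖_{H^1}^{p+1}. Equivalently, sup{ (∫ |x|^b |f|^{p+1} dx) / ‖f‖_{H^1}^{p+1} : f ∈ H^1(ℝ^N), f ≠ 0 } = ∞. -/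
open MeasureTheory Filter
open scoped ENNReal NNReal BigOperators

noncomputable section

abbrev Euc (N : ℕ) := EuclideanSpace ℝ (Fin N)

/-- A function on `ℝ^N` is radial if its value depends only on the norm of the argument. -/
def Radial {N : ℕ} {α : Type*} (f : Euc N → α) : Prop :=
  ∀ x y : Euc N, ‖x‖ = ‖y‖ → f x = f y

/-- Membership in `H^1(ℝ^N)`: `f` and its gradient belong to `L²`. -/
def MemH1 {N : ℕ} {F : Type*} [NormedAddCommGroup F] [NormedSpace ℝ F] (f : Euc N → F) : Prop :=
  Differentiable ℝ f ∧ MemLp f 2 volume ∧ MemLp (fun x => fderiv ℝ f x) 2 volume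

/-- `L²` norm. -/
noncomputable def L2norm {N : ℕ} {F : Type*} [NormedAddCommGroup F] (f : Euc N → F) : ℝ :=
  (eLpNorm f 2 volume).toReal

/-- `L²` norm of the gradient: `(∫ |∇f|²)^{1/2}` with `|∇f|² = ∑ᵢ |∂ᵢ f|²`. -/
noncomputable def gradL2norm {N : ℕ} {F : Type*} [NormedAddCommGroup F] [NormedSpace ℝ F]
    (f : Euc N → F) : ℝ :=
  Real.sqrt (∫ x : Euc N, ∑ i : Fin N, ‖fderiv ℝ f x (EuclideanSpace.single i 1)‖ ^ 2)

/-- `H¹` norm: `(‖f‖_{L²}² + ‖∇f‖_{L²}²)^{1/2}`. -/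
noncomputable def H1norm {N : ℕ} {F : Type*} [NormedAddCommGroup F] [NormedSpace ℝ F]
    (f : Euc N → F) : ℝ :=
  Real.sqrt (L2norm f ^ 2 + gradL2norm f ^ 2)


namespace GNaux

/-- squared ReLU -/
def q (u : ℝ) : ℝ := (max u 0)^2

lemma q_nonneg (u : ℝ) : 0 ≤ q u := sq_nonneg _
lemma q_eq_zero {u : ℝ} (h : u ≤ 0) : q u = 0 := by simp [q, max_eq_right h]
lemma q_le_one {u : ℝ} (h : u ≤ 1) : q u ≤ 1 := by
  have h1 : max u 0 ≤ 1 := max_le h one_pos.le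
  have h0 : 0 ≤ max u 0 := le_max_right _ _
  calc (max u 0)^2 ≤ 1^2 := pow_le_pow_left₀ h0 h1 2
    _ = 1 := one_pow 2
lemma q_quarter {u : ℝ} (h : 3/4 ≤ u) : 1/4 ≤ q u := by
  have : (3/4 : ℝ) ≤ max u 0 := le_trans h (le_max_left _ _)
  have := pow_le_pow_left₀ (by norm_num : (0:ℝ) ≤ 3/4) this 2
  calc (1/4:ℝ) ≤ (3/4)^2 := by norm_num
    _ ≤ _ := this

lemma q_hasDerivAt (u : ℝ) : HasDerivAt q (2 * max u 0) u := by
  rcases lt_trichotomy u 0 with hu | hu | hu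
  · have : q =ᶠ[nhds u] fun _ => (0:ℝ) := by
      filter_upwards [Iio_mem_nhds hu] with v hv
      exact q_eq_zero (le_of_lt hv)
    have h0 : HasDerivAt (fun _ : ℝ => (0:ℝ)) 0 u := hasDerivAt_const u 0
    have := h0.congr_of_eventuallyEq this
    simpa [max_eq_right hu.le] using this
  · subst hu
    rw [hasDerivAt_iff_isLittleO]
    simp only [max_self, mul_zero] -- max 0 0 = 0
    have hO : (fun v : ℝ => q v - q 0 - (v - 0) * 0) =O[nhds 0] (fun v => v^2) := by
      apply Asymptotics.isBigO_of_le
      intro v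
      have h1 : |q v| ≤ |v^2| := by
        rw [abs_of_nonneg (q_nonneg v), abs_of_nonneg (sq_nonneg v)]
        rcases le_or_gt v 0 with h | h
        · rw [q_eq_zero h]; positivity
        · simp [q, max_eq_left h.le]
      simpa [q_eq_zero (le_refl (0:ℝ))] using h1
    refine hO.trans_isLittleO ?_
    have : (fun v : ℝ => v^2) =o[nhds 0] (fun v => v) := by
      have := Asymptotics.isLittleO_pow_pow (𝕜 := ℝ) (m := 1) (n := 2) one_lt_two
      simpa [Function.comp_def] using this.comp_tendsto (by exact tendsto_id)
    simpa using this
  · have : q =ᶠ[nhds u] fun v => v^2 := by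
      filter_upwards [Ioi_mem_nhds hu] with v hv
      simp [q, max_eq_left (le_of_lt (Set.mem_Ioi.1 hv))]
    have h0 : HasDerivAt (fun v : ℝ => v^2) (2*u) u := by
      simpa using (hasDerivAt_pow 2 u)
    have := h0.congr_of_eventuallyEq this
    simpa [max_eq_left hu.le] using this

lemma q_continuous : Continuous q := by
  unfold q; fun_prop

end GNaux

open GNaux

namespace GNc

variable (N : ℕ) (R : ℝ)

def aR (x : Euc N) : ℝ := 1 - ((‖x‖^2 - R^2)/R)^2
def fR (x : Euc N) : ℂ := (q (aR N R x) : ℂ)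
def DaR (x : Euc N) : Euc N →L[ℝ] ℝ :=
  -((2 * ((‖x‖^2 - R^2)/R)) • (R⁻¹ • (2 • (innerSL ℝ x))))
def DfR (x : Euc N) : Euc N →L[ℝ] ℂ :=
  Complex.ofRealCLM.comp ((2 * max (aR N R x) 0) • DaR N R x)

variable {N R}

lemma hasFDerivAt_aR (x : Euc N) : HasFDerivAt (aR N R) (DaR N R x) x := by
  have h1 : HasFDerivAt (fun y : Euc N => ‖y‖^2) (2 • (innerSL ℝ x)) x :=
    (hasStrictFDerivAt_norm_sq x).hasFDerivAt
  have h2 : HasFDerivAt (fun y : Euc N => (‖y‖^2 - R^2)/R) (R⁻¹ • (2 • (innerSL ℝ x))) x := by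
    have := (h1.sub_const (R^2)).mul_const R⁻¹
    simpa [div_eq_mul_inv, smul_smul, mul_comm] using this
  have h3 : HasFDerivAt (fun y : Euc N => ((‖y‖^2 - R^2)/R)^2)
      ((2 * ((‖x‖^2 - R^2)/R)) • (R⁻¹ • (2 • (innerSL ℝ x)))) x := by
    have := (hasDerivAt_pow 2 ((‖x‖^2 - R^2)/R)).comp_hasFDerivAt x h2
    simpa [pow_one, mul_comm, Function.comp_def] using this
  have := (hasFDerivAt_const (1:ℝ) x).sub h3
  rw [zero_sub] at this
  exact this

lemma q_hasDerivAt' (u : ℝ) : HasDerivAt q (2 * max u 0) u := q_hasDerivAt u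

lemma hasFDerivAt_fR (x : Euc N) : HasFDerivAt (fR N R) (DfR N R x) x := by
  have h1 : HasFDerivAt (fun y : Euc N => q (aR N R y))
      ((2 * max (aR N R x) 0) • DaR N R x) x :=
    (q_hasDerivAt' (aR N R x)).comp_hasFDerivAt x (hasFDerivAt_aR x)
  exact Complex.ofRealCLM.hasFDerivAt.comp x h1

lemma fderiv_fR (x : Euc N) : fderiv ℝ (fR N R) x = DfR N R x :=
  (hasFDerivAt_fR x).fderiv

lemma DfR_apply (x : Euc N) (e : Euc N) :
    DfR N R x e = ((2 * max (aR N R x) 0) * (-((2 * ((‖x‖^2 - R^2)/R)) * (R⁻¹ * (2 * (inner ℝ x e : ℝ))))) : ℝ) := by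
  simp [DfR, DaR, mul_assoc]

lemma norm_DfR_apply_le (hR : 1 ≤ R) (x : Euc N) (e : Euc N) :
    ‖DfR N R x e‖ ≤ 16 * ‖e‖ := by
  have hR0 : (0:ℝ) < R := lt_of_lt_of_le one_pos hR
  rcases le_or_gt (aR N R x) 0 with h | h
  · rw [DfR_apply, max_eq_right h]
    simp only [mul_zero, zero_mul, Complex.ofReal_zero, norm_zero]
    positivity
  ·
    set u := (‖x‖^2 - R^2)/R with hu
    have hu2 : u^2 < 1 := by
      have : 1 - u^2 > 0 := h
      linarith
    have hu1 : |u| ≤ 1 := by nlinarith [abs_nonneg u, sq_abs u]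
    have hx2 : ‖x‖^2 ≤ R^2 + R := by
      have : |‖x‖^2 - R^2| ≤ R := by
        rw [abs_le]
        have h1 := (abs_le.1 hu1).1
        have h2 := (abs_le.1 hu1).2
        constructor
        · have h1' := (le_div_iff₀ hR0).1 h1
          nlinarith
        · nlinarith [(div_le_iff₀ hR0).1 h2]
      nlinarith [abs_le.1 this]
    have hxn : ‖x‖ ≤ 2 * R := by
      nlinarith [norm_nonneg x, sq_nonneg (‖x‖ - 2*R)]
    have hmax : max (aR N R x) 0 ≤ 1 := by
      have : aR N R x ≤ 1 := by
        simp only [aR]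
        nlinarith [sq_nonneg u]
      exact max_le this one_pos.le
    have hmax0 : (0:ℝ) ≤ max (aR N R x) 0 := le_max_right _ _
    have hinner : |(inner ℝ x e : ℝ)| ≤ ‖x‖ * ‖e‖ := abs_real_inner_le_norm x e
    rw [DfR_apply]
    rw [Complex.norm_real]
    have : |2 * max (aR N R x) 0 * -(2 * u * (R⁻¹ * (2 * (inner ℝ x e : ℝ))))|
        ≤ 2 * 1 * (2 * 1 * (R⁻¹ * (2 * (‖x‖ * ‖e‖)))) := by
      rw [abs_mul, abs_neg, abs_mul, abs_mul, abs_mul, abs_mul, abs_two,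
        abs_of_nonneg hmax0, abs_of_pos (inv_pos.2 hR0)]
      rw [abs_mul, abs_two]
      gcongr
    refine le_trans this ?_
    have hRinv_le : R⁻¹ * ‖x‖ ≤ 2 := by
      rw [inv_mul_le_iff₀ hR0]
      linarith
    have he : (0:ℝ) ≤ ‖e‖ := norm_nonneg e
    calc 2 * 1 * (2 * 1 * (R⁻¹ * (2 * (‖x‖ * ‖e‖)))) = 8 * (R⁻¹ * ‖x‖) * ‖e‖ := by ring
      _ ≤ 8 * 2 * ‖e‖ := by
          have := mul_le_mul_of_nonneg_right (mul_le_mul_of_nonneg_left hRinv_le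
            (by norm_num : (0:ℝ) ≤ 8)) he
          linarith
      _ = 16 * ‖e‖ := by ring

lemma q_continuous' : Continuous q := by unfold q; fun_prop
lemma q_nonneg' (u : ℝ) : 0 ≤ q u := sq_nonneg _

lemma aR_le_one (x : Euc N) : aR N R x ≤ 1 := by
  simp only [aR]; nlinarith [sq_nonneg ((‖x‖^2 - R^2)/R)]

lemma norm_fR (x : Euc N) : ‖fR N R x‖ = q (aR N R x) := by
  rw [fR, Complex.norm_real, Real.norm_eq_abs, abs_of_nonneg (q_nonneg' _)]

lemma sq_bounds (hR : 1 ≤ R) {x : Euc N} (h : 0 < aR N R x) :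
    R^2 - R ≤ ‖x‖^2 ∧ ‖x‖^2 ≤ R^2 + R := by
  have hR0 : (0:ℝ) < R := lt_of_lt_of_le one_pos hR
  set u := (‖x‖^2 - R^2)/R with hu
  have hu2 : u^2 < 1 := by have : 1 - u^2 > 0 := h; linarith
  have hu1 : |u| ≤ 1 := by nlinarith [abs_nonneg u, sq_abs u]
  have h1 := (le_div_iff₀ hR0).1 (abs_le.1 hu1).1
  have h2 := (div_le_iff₀ hR0).1 (abs_le.1 hu1).2
  constructor <;> nlinarith

def SS (N : ℕ) (R : ℝ) : Set (Euc N) := Metric.closedBall (0:Euc N) (R+1) \ Metric.ball 0 (R-1)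

lemma mem_S_of_pos (hR : 1 ≤ R) {x : Euc N} (h : 0 < aR N R x) : x ∈ SS N R := by
  have hR0 : (0:ℝ) < R := lt_of_lt_of_le one_pos hR
  obtain ⟨hlo, hhi⟩ := sq_bounds hR h
  constructor
  · rw [Metric.mem_closedBall, dist_zero_right]
    nlinarith [norm_nonneg x]
  · rw [Metric.mem_ball, dist_zero_right, not_lt]
    nlinarith [norm_nonneg x]

lemma a_nonpos_of_not_mem (hR : 1 ≤ R) {x : Euc N} (h : x ∉ SS N R) : aR N R x ≤ 0 := by
  by_contra hc
  exact h (mem_S_of_pos hR (lt_of_not_ge hc))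

lemma fR_eq_zero {x : Euc N} (h : aR N R x ≤ 0) : fR N R x = 0 := by
  simp [fR, q, max_eq_right h]

lemma DfR_eq_zero {x : Euc N} (h : aR N R x ≤ 0) : DfR N R x = 0 := by
  simp [DfR, max_eq_right h]

lemma continuous_aR : Continuous (aR N R) := by unfold aR; fun_prop

lemma continuous_fR : Continuous (fR N R) :=
  Complex.continuous_ofReal.comp (q_continuous'.comp continuous_aR)

lemma continuous_DfR : Continuous (DfR N R) := by
  apply continuous_const.clm_comp
  apply Continuous.fun_smul
  · exact (continuous_const.mul ((continuous_aR (N := N) (R := R)).max continuous_const))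
  · unfold DaR
    apply Continuous.neg
    apply Continuous.fun_smul
    · fun_prop
    · exact ((innerSL ℝ (E := Euc N)).continuous.const_smul 2).const_smul R⁻¹

lemma SS_compact : IsCompact (SS N R) :=
  (isCompact_closedBall _ _).of_isClosed_subset
    (Metric.isClosed_closedBall.sdiff Metric.isOpen_ball) Set.diff_subset

lemma hasCompactSupport_fR (hR : 1 ≤ R) : HasCompactSupport (fR N R) := by
  apply HasCompactSupport.intro (SS_compact (N := N) (R := R))
  intro x hx
  exact fR_eq_zero (a_nonpos_of_not_mem hR hx)

lemma hasCompactSupport_DfR (hR : 1 ≤ R) : HasCompactSupport (DfR N R) := by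
  apply HasCompactSupport.intro (SS_compact (N := N) (R := R))
  intro x hx
  exact DfR_eq_zero (a_nonpos_of_not_mem hR hx)

lemma pow_sub_pow_le' {a c : ℝ} (h0 : 0 ≤ c) (h : c ≤ a) (n : ℕ) :
    a^n - c^n ≤ n * a^(n-1) * (a - c) := by
  have ha : 0 ≤ a := le_trans h0 h
  have key : (∑ i ∈ Finset.range n, a ^ i * c ^ (n - 1 - i)) * (a - c) = a ^ n - c ^ n :=
    geom_sum₂_mul a c n
  rw [← key]
  have hsum : (∑ i ∈ Finset.range n, a ^ i * c ^ (n - 1 - i)) ≤ n * a^(n-1) := by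
    calc (∑ i ∈ Finset.range n, a ^ i * c ^ (n - 1 - i))
        ≤ ∑ _i ∈ Finset.range n, a^(n-1) := by
          apply Finset.sum_le_sum
          intro i hi
          have hi' : i < n := Finset.mem_range.1 hi
          calc a ^ i * c ^ (n - 1 - i) ≤ a ^ i * a ^ (n - 1 - i) := by
                apply mul_le_mul_of_nonneg_left (pow_le_pow_left₀ h0 h _) (by positivity)
            _ = a ^ (i + (n - 1 - i)) := (pow_add a i (n-1-i)).symm
            _ = a ^ (n-1) := by congr 1; omega
      _ = n * a^(n-1) := by rw [Finset.sum_const, Finset.card_range]; ring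
  exact mul_le_mul_of_nonneg_right hsum (by linarith)

lemma add_eighth_pow_ge {a : ℝ} (h : 1 ≤ a) {n : ℕ} (hn : 1 ≤ n) :
    a^n + n * a^(n-1) * (1/8) ≤ (a + 1/8)^n := by
  have ha0 : (0:ℝ) < a := lt_of_lt_of_le one_pos h
  have hx : (0:ℝ) ≤ 1/(8*a) := by positivity
  have hbern : 1 + n * (1/(8*a)) ≤ (1 + 1/(8*a))^n :=
    one_add_mul_le_pow (by linarith) n
  have hmul := mul_le_mul_of_nonneg_left hbern (by positivity : (0:ℝ) ≤ a^n)
  have heq : a^n * (1 + 1/(8*a))^n = (a + 1/8)^n := by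
    rw [← mul_pow]
    congr 1
    field_simp
  rw [heq] at hmul
  refine le_trans (le_of_eq ?_) hmul
  have han : a^n = a^(n-1) * a := by
    conv_lhs => rw [show n = (n-1) + 1 by omega]
    rw [pow_succ]
  rw [mul_add, mul_one, han]
  field_simp


lemma nontrivial_euc (hN : 1 ≤ N) : Nontrivial (Euc N) := by
  refine ⟨⟨EuclideanSpace.single ⟨0, by omega⟩ (1:ℝ), 0, ?_⟩⟩
  apply ne_of_apply_ne norm
  simp [EuclideanSpace.norm_single]

lemma vol_SS_le (hN : 1 ≤ N) (hR : 1 ≤ R) : (volume (SS N R)).toReal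
    ≤ (2*N*(2*R)^(N-1)) * (volume (Metric.ball (0:Euc N) 1)).toReal := by
  haveI := nontrivial_euc (N := N) hN
  set ωe : ℝ≥0∞ := volume (Metric.ball (0:Euc N) 1) with hω
  have hR0 : (0:ℝ) < R := lt_of_lt_of_le one_pos hR
  have h1 : (0:ℝ) ≤ R - 1 := by linarith
  have h2 : (0:ℝ) ≤ R + 1 := by linarith
  have hsub : Metric.ball (0:Euc N) (R-1) ⊆ Metric.closedBall 0 (R+1) :=
    le_trans Metric.ball_subset_closedBall (Metric.closedBall_subset_closedBall (by linarith))
  have hballfin : volume (Metric.ball (0:Euc N) (R-1)) ≠ ⊤ := measure_ball_lt_top.ne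
  have hd : volume (SS N R)
      = volume (Metric.closedBall (0:Euc N) (R+1)) - volume (Metric.ball (0:Euc N) (R-1)) := by
    rw [SS, measure_diff hsub measurableSet_ball.nullMeasurableSet hballfin]
  have hcb : volume (Metric.closedBall (0:Euc N) (R+1))
      = ENNReal.ofReal ((R+1)^N) * ωe := by
    rw [Measure.addHaar_closedBall volume 0 h2, finrank_euclideanSpace_fin]
  have hball : volume (Metric.ball (0:Euc N) (R-1))
      = ENNReal.ofReal ((R-1)^N) * ωe := by
    rw [Measure.addHaar_ball volume 0 h1, finrank_euclideanSpace_fin]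
  have hle : volume (SS N R) ≤ ENNReal.ofReal ((R+1)^N - (R-1)^N) * ωe := by
    have hmono := pow_le_pow_left₀ h1 (by linarith : R - 1 ≤ R + 1) N
    rw [hd, hcb, hball, tsub_le_iff_right, ← add_mul,
      ← ENNReal.ofReal_add (by linarith) (by positivity)]
    gcongr
    linarith
  have hωfin : ωe ≠ ⊤ := measure_ball_lt_top.ne
  calc (volume (SS N R)).toReal
      ≤ (ENNReal.ofReal ((R+1)^N - (R-1)^N) * ωe).toReal := by
        apply ENNReal.toReal_mono (by finiteness) hle
    _ = ((R+1)^N - (R-1)^N) * ωe.toReal := by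
        rw [ENNReal.toReal_mul, ENNReal.toReal_ofReal]
        nlinarith [pow_le_pow_left₀ h1 (by linarith : R - 1 ≤ R + 1) N]
    _ ≤ (2*N*(2*R)^(N-1)) * ωe.toReal := by
        apply mul_le_mul_of_nonneg_right _ ENNReal.toReal_nonneg
        have := pow_sub_pow_le' h1 (by linarith : R - 1 ≤ R + 1) N
        have h3 : (R+1)^(N-1) ≤ (2*R)^(N-1) := pow_le_pow_left₀ h2 (by linarith) _
        have h4 : (0:ℝ) ≤ (N:ℝ) := Nat.cast_nonneg N
        nlinarith [pow_nonneg h2 (N-1), pow_nonneg (by linarith : (0:ℝ) ≤ 2*R) (N-1)]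


def AA (N : ℕ) (R : ℝ) : Set (Euc N) :=
  Metric.ball (0:Euc N) (Real.sqrt (R^2 + R/2)) \ Metric.closedBall 0 R

lemma r2_ge (hR : 1 ≤ R) : R + 1/8 ≤ Real.sqrt (R^2 + R/2) := by
  have h : (R + 1/8)^2 ≤ R^2 + R/2 := by nlinarith
  calc R + 1/8 = Real.sqrt ((R + 1/8)^2) := (Real.sqrt_sq (by linarith)).symm
    _ ≤ Real.sqrt (R^2 + R/2) := Real.sqrt_le_sqrt h

lemma vol_AA_ge (hN : 1 ≤ N) (hR : 1 ≤ R) :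
    (volume (Metric.ball (0:Euc N) 1)).toReal / 8 * R^(N-1) ≤ (volume (AA N R)).toReal := by
  haveI := nontrivial_euc (N := N) hN
  set ωe : ℝ≥0∞ := volume (Metric.ball (0:Euc N) 1) with hω
  have hR0 : (0:ℝ) < R := lt_of_lt_of_le one_pos hR
  set r2 : ℝ := Real.sqrt (R^2 + R/2) with hr2
  have hr2ge : R + 1/8 ≤ r2 := r2_ge hR
  have hr2pos : (0:ℝ) ≤ r2 := Real.sqrt_nonneg _
  have hsub : Metric.closedBall (0:Euc N) R ⊆ Metric.ball 0 r2 :=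
    Metric.closedBall_subset_ball (by linarith)
  have hcbfin : volume (Metric.closedBall (0:Euc N) R) ≠ ⊤ := measure_closedBall_lt_top.ne
  have hd : volume (AA N R)
      = volume (Metric.ball (0:Euc N) r2) - volume (Metric.closedBall (0:Euc N) R) := by
    rw [AA, measure_diff hsub measurableSet_closedBall.nullMeasurableSet hcbfin]
  have hball : volume (Metric.ball (0:Euc N) r2) = ENNReal.ofReal (r2^N) * ωe := by
    rw [Measure.addHaar_ball volume 0 hr2pos, finrank_euclideanSpace_fin]
  have hcb : volume (Metric.closedBall (0:Euc N) R) = ENNReal.ofReal (R^N) * ωe := by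
    rw [Measure.addHaar_closedBall volume 0 hR0.le, finrank_euclideanSpace_fin]
  have hωfin : ωe ≠ ⊤ := measure_ball_lt_top.ne
  have hRn_le : (R:ℝ)^N ≤ r2^N := pow_le_pow_left₀ hR0.le (by linarith) N
  have htr : (volume (AA N R)).toReal = (r2^N - R^N) * ωe.toReal := by
    have hle2 : ENNReal.ofReal (R^N) * ωe ≤ ENNReal.ofReal (r2^N) * ωe :=
      mul_le_mul_left (ENNReal.ofReal_le_ofReal hRn_le) ωe
    rw [hd, hball, hcb, ENNReal.toReal_sub_of_le hle2 (by finiteness)]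
    rw [ENNReal.toReal_mul, ENNReal.toReal_mul, ENNReal.toReal_ofReal (by positivity),
      ENNReal.toReal_ofReal (by positivity), ← sub_mul]
  rw [htr]
  have hkey : R^N + (N:ℝ) * R^(N-1) * (1/8) ≤ r2^N := by
    calc R^N + (N:ℝ) * R^(N-1) * (1/8) ≤ (R + 1/8)^N := add_eighth_pow_ge hR hN
      _ ≤ r2^N := pow_le_pow_left₀ (by linarith) hr2ge N
  have hN1 : (1:ℝ) ≤ (N:ℝ) := by exact_mod_cast hN
  have hsum : R^(N-1) / 8 ≤ r2^N - R^N := by nlinarith [pow_nonneg hR0.le (N-1)]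
  calc ωe.toReal / 8 * R^(N-1) = R^(N-1)/8 * ωe.toReal := by ring
    _ ≤ (r2^N - R^N) * ωe.toReal := mul_le_mul_of_nonneg_right hsum ENNReal.toReal_nonneg

lemma q_le_one'' {u : ℝ} (h : u ≤ 1) : q u ≤ 1 := q_le_one h
lemma q_quarter'' {u : ℝ} (h : 3/4 ≤ u) : 1/4 ≤ q u := q_quarter h

lemma SS_meas : MeasurableSet (SS N R) := measurableSet_closedBall.diff measurableSet_ball
lemma SS_vol_fin : volume (SS N R) < ⊤ :=
  lt_of_le_of_lt (measure_mono Set.diff_subset) measure_closedBall_lt_top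
lemma AA_meas : MeasurableSet (AA N R) := measurableSet_ball.diff measurableSet_closedBall
lemma AA_vol_fin : volume (AA N R) < ⊤ :=
  lt_of_le_of_lt (measure_mono Set.diff_subset) measure_ball_lt_top

lemma memL2_fR (hR : 1 ≤ R) : MemLp (fR N R) 2 volume :=
  continuous_fR.memLp_of_hasCompactSupport (hasCompactSupport_fR hR)

lemma memL2_DfR (hR : 1 ≤ R) : MemLp (fun x => fderiv ℝ (fR N R) x) 2 volume := by
  have : (fun x => fderiv ℝ (fR N R) x) = DfR N R := funext fun x => fderiv_fR x
  rw [this]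
  exact continuous_DfR.memLp_of_hasCompactSupport (hasCompactSupport_DfR hR)

lemma L2sq_le (hR : 1 ≤ R) :
    (eLpNorm (fR N R) 2 volume).toReal^2 ≤ (volume (SS N R)).toReal := by
  have hmono : ∀ x, ‖fR N R x‖ ≤ ‖(SS N R).indicator (fun _ => (1:ℝ)) x‖ := by
    intro x
    by_cases hx : x ∈ SS N R
    · rw [Set.indicator_of_mem hx, norm_fR]
      simpa using q_le_one'' (aR_le_one x)
    · rw [fR_eq_zero (a_nonpos_of_not_mem hR hx), Set.indicator_of_notMem hx]
      simp
  have h1 : eLpNorm (fR N R) 2 volume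
      ≤ eLpNorm ((SS N R).indicator (fun _ => (1:ℝ))) 2 volume := eLpNorm_mono hmono
  rw [eLpNorm_indicator_const SS_meas two_ne_zero ENNReal.ofNat_ne_top] at h1
  have h2 : eLpNorm (fR N R) 2 volume ≤ volume (SS N R) ^ ((1:ℝ)/2) := by
    simpa using h1
  have hrne : volume (SS N R) ^ ((1:ℝ)/2) ≠ ⊤ :=
    ENNReal.rpow_ne_top_of_nonneg (by norm_num) SS_vol_fin.ne
  have h3 := ENNReal.toReal_mono hrne h2
  have h4 : ((volume (SS N R)) ^ ((1:ℝ)/2)).toReal ^ 2 = (volume (SS N R)).toReal := by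
    rw [← ENNReal.toReal_rpow, ← Real.sqrt_eq_rpow]
    exact Real.sq_sqrt ENNReal.toReal_nonneg
  calc (eLpNorm (fR N R) 2 volume).toReal^2
      ≤ ((volume (SS N R)) ^ ((1:ℝ)/2)).toReal ^ 2 :=
        pow_le_pow_left₀ ENNReal.toReal_nonneg h3 2
    _ = (volume (SS N R)).toReal := h4

lemma grad_int_le (hR : 1 ≤ R) :
    ∫ x : Euc N, ∑ i : Fin N, ‖fderiv ℝ (fR N R) x (EuclideanSpace.single i 1)‖ ^ 2
      ≤ ((N:ℝ) * 256) * (volume (SS N R)).toReal := by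
  have hfd : ∀ x, fderiv ℝ (fR N R) x = DfR N R x := fun x => fderiv_fR x
  have hint : Integrable (fun x : Euc N =>
      ∑ i : Fin N, ‖DfR N R x (EuclideanSpace.single i 1)‖ ^ 2) volume := by
    apply Continuous.integrable_of_hasCompactSupport
    · exact continuous_finset_sum _ fun i _ =>
        (((ContinuousLinearMap.apply ℝ ℂ
          (EuclideanSpace.single i (1:ℝ))).continuous.comp continuous_DfR).norm.pow 2)
    · apply HasCompactSupport.intro (SS_compact (N := N) (R := R))
      intro x hx
      rw [DfR_eq_zero (a_nonpos_of_not_mem hR hx)]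
      simp
  have hbd : ∀ x : Euc N, ∑ i : Fin N, ‖DfR N R x (EuclideanSpace.single i 1)‖ ^ 2
      ≤ (SS N R).indicator (fun _ => ((N:ℝ) * 256)) x := by
    intro x
    by_cases hx : x ∈ SS N R
    · rw [Set.indicator_of_mem hx]
      have : ∀ i : Fin N, ‖DfR N R x (EuclideanSpace.single i (1:ℝ))‖ ^ 2 ≤ 256 := by
        intro i
        have h16 : ‖DfR N R x (EuclideanSpace.single i (1:ℝ))‖ ≤ 16 := by
          have := norm_DfR_apply_le hR x (EuclideanSpace.single i (1:ℝ))
          simpa [EuclideanSpace.norm_single] using this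
        calc ‖DfR N R x (EuclideanSpace.single i (1:ℝ))‖ ^ 2 ≤ 16^2 :=
            pow_le_pow_left₀ (norm_nonneg _) h16 2
          _ = 256 := by norm_num
      calc ∑ i : Fin N, ‖DfR N R x (EuclideanSpace.single i 1)‖ ^ 2
          ≤ ∑ _i : Fin N, (256:ℝ) := Finset.sum_le_sum fun i _ => this i
        _ = (N:ℝ) * 256 := by
            rw [Finset.sum_const, Finset.card_univ, Fintype.card_fin, nsmul_eq_mul]
    · rw [Set.indicator_of_notMem hx, DfR_eq_zero (a_nonpos_of_not_mem hR hx)]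
      simp
  have hind : Integrable ((SS N R).indicator (fun _ => ((N:ℝ) * 256))) volume := by
    rw [integrable_indicator_iff SS_meas]
    exact integrableOn_const SS_vol_fin.ne
  calc ∫ x : Euc N, ∑ i : Fin N, ‖fderiv ℝ (fR N R) x (EuclideanSpace.single i 1)‖ ^ 2
      = ∫ x : Euc N, ∑ i : Fin N, ‖DfR N R x (EuclideanSpace.single i 1)‖ ^ 2 := by
        congr 1
        funext x
        simp only [hfd]
    _ ≤ ∫ x : Euc N, (SS N R).indicator (fun _ => ((N:ℝ) * 256)) x :=
        integral_mono hint hind hbd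
    _ = ((volume (SS N R)).toReal) • ((N:ℝ) * 256) := by
        rw [integral_indicator_const _ SS_meas, measureReal_def]
    _ = ((N:ℝ) * 256) * (volume (SS N R)).toReal := by
        rw [smul_eq_mul]; ring

lemma int_lower (hR : 1 ≤ R) {b pp : ℝ} (hb : 0 < b) (hpp : 0 < pp) :
    R^b * (1/4)^pp * (volume (AA N R)).toReal
      ≤ ∫ x : Euc N, ‖x‖^b * ‖fR N R x‖^pp := by
  have hR0 : (0:ℝ) < R := lt_of_lt_of_le one_pos hR
  set g : Euc N → ℝ := fun x => ‖x‖^b * ‖fR N R x‖^pp with hg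
  have hgc : Continuous g := by
    apply Continuous.mul
    · exact continuous_norm.rpow_const fun x => Or.inr hb.le
    · exact (continuous_norm.comp continuous_fR).rpow_const fun x => Or.inr hpp.le
  have hgs : HasCompactSupport g := by
    apply HasCompactSupport.intro (SS_compact (N := N) (R := R))
    intro x hx
    have : fR N R x = 0 := fR_eq_zero (a_nonpos_of_not_mem hR hx)
    simp [hg, this, Real.zero_rpow hpp.ne']
  have hgi : Integrable g volume := hgc.integrable_of_hasCompactSupport hgs
  have hg0 : ∀ x, 0 ≤ g x := fun x => by
    apply mul_nonneg <;> exact Real.rpow_nonneg (norm_nonneg _) _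
  have hlow : ∀ x ∈ AA N R, R^b * (1/4)^pp ≤ g x := by
    intro x hx
    obtain ⟨hx1, hx2⟩ := hx
    rw [Metric.mem_ball, dist_zero_right] at hx1
    rw [Metric.mem_closedBall, dist_zero_right, not_le] at hx2
    have hxsq : ‖x‖^2 < R^2 + R/2 := by
      have := Real.sq_sqrt (by positivity : (0:ℝ) ≤ R^2 + R/2)
      nlinarith [norm_nonneg x, Real.sqrt_nonneg (R^2 + R/2)]
    have hxsq2 : R^2 ≤ ‖x‖^2 := by nlinarith
    have haR : 3/4 ≤ aR N R x := by
      have hu0 : 0 ≤ (‖x‖^2 - R^2)/R := div_nonneg (by linarith) hR0.le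
      have hu1 : (‖x‖^2 - R^2)/R ≤ 1/2 := by
        rw [div_le_iff₀ hR0]; linarith
      simp only [aR]
      nlinarith
    have hfq : 1/4 ≤ ‖fR N R x‖ := by
      rw [norm_fR]; exact q_quarter'' haR
    have h1 : R^b ≤ ‖x‖^b := Real.rpow_le_rpow hR0.le hx2.le hb.le
    have h2 : (1/4:ℝ)^pp ≤ ‖fR N R x‖^pp :=
      Real.rpow_le_rpow (by norm_num) hfq hpp.le
    exact mul_le_mul h1 h2 (Real.rpow_nonneg (by norm_num) _)
      (Real.rpow_nonneg (norm_nonneg _) _)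
  calc R^b * (1/4)^pp * (volume (AA N R)).toReal
      = ∫ _x in AA N R, (R^b * (1/4)^pp : ℝ) := by
        rw [setIntegral_const, smul_eq_mul, mul_comm, measureReal_def]
    _ ≤ ∫ x in AA N R, g x := by
        apply setIntegral_mono_on
        · exact integrableOn_const AA_vol_fin.ne
        · exact hgi.integrableOn
        · exact AA_meas
        · exact hlow
    _ ≤ ∫ x, g x := setIntegral_le_integral hgi (Eventually.of_forall hg0)


end GNc

/-- For `1 < p < 1 + 2b/(N-1)` the Gagliardo–Nirenberg quotient is unbounded on radial `H¹`
(Lemma 2.5 of the paper). -/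
theorem gagliardo_nirenberg_quotient_unbounded (N : ℕ) (b p : ℝ) (hN : 2 ≤ N) (hb : 0 < b)
    (hp1 : 1 < p) (hp2 : p < 1 + 2 * b / ((N : ℝ) - 1)) :
    ∀ M : ℝ, 0 < M → ∃ f : Euc N → ℂ, Radial f ∧ MemH1 f ∧ f ≠ 0 ∧
      M * H1norm f ^ (p + 1) < ∫ x : Euc N, ‖x‖ ^ b * ‖f x‖ ^ (p + 1) := by

  intro M hM
  have hN1 : 1 ≤ N := by omega
  set m : ℕ := N - 1 with hm
  have hmcast : ((m:ℝ)) = (N:ℝ) - 1 := by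
    rw [hm]; push_cast [Nat.cast_sub hN1]; ring
  have hmpos : (0:ℝ) < (m:ℝ) := by
    rw [hmcast]
    have : (2:ℝ) ≤ (N:ℝ) := by exact_mod_cast hN
    linarith
  -- constants
  set ωr : ℝ := (volume (Metric.ball (0:Euc N) 1)).toReal with hωr
  have hωpos : 0 < ωr := ENNReal.toReal_pos
    (Metric.measure_ball_pos volume 0 one_pos).ne' measure_ball_lt_top.ne
  set K : ℝ := (1 + 256*(N:ℝ)) * (2*(N:ℝ)*2^(N-1)*ωr) with hK
  have hKpos : 0 < K := by
    have hNpos : (0:ℝ) < (N:ℝ) := by positivity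
    have : (0:ℝ) < 2*(N:ℝ)*2^(N-1)*ωr := by positivity
    nlinarith
  set c1 : ℝ := (1/4:ℝ)^(p+1) * (ωr/8) with hc1
  have hc1pos : 0 < c1 := by
    have := Real.rpow_pos_of_pos (by norm_num : (0:ℝ) < 1/4) (p+1)
    positivity
  set c3 : ℝ := (Real.sqrt K)^(p+1) with hc3
  have hc3pos : 0 < c3 := Real.rpow_pos_of_pos (Real.sqrt_pos.2 hKpos) _
  set δ : ℝ := (m:ℝ)/2*(p+1) with hδ
  set ε : ℝ := b + (m:ℝ) - δ with hε
  have hεpos : 0 < ε := by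
    have hp2' : p < 1 + 2*b/(m:ℝ) := by rw [hmcast]; exact hp2
    have h1 : p - 1 < 2*b/(m:ℝ) := by linarith
    have h2 : (p-1)*(m:ℝ) < 2*b := (lt_div_iff₀ hmpos).1 h1
    rw [hε, hδ]
    nlinarith
  -- choose R
  obtain ⟨R, hRbig, hR⟩ :=
    (((tendsto_rpow_atTop hεpos).eventually_gt_atTop (M * c3 / c1)).and
      (eventually_ge_atTop (1:ℝ))).exists
  have hR0 : (0:ℝ) < R := lt_of_lt_of_le one_pos hR
  refine ⟨GNc.fR N R, ?_, ?_, ?_, ?_⟩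
  · intro x y hxy
    simp only [GNc.fR, GNc.aR, hxy]
  · refine ⟨fun x => (GNc.hasFDerivAt_fR x).differentiableAt, GNc.memL2_fR hR,
      GNc.memL2_DfR hR⟩
  · intro h0
    have h1 : GNc.fR N R (EuclideanSpace.single (⟨0, by omega⟩ : Fin N) R) = 0 := by
      rw [h0]; rfl
    rw [GNc.fR] at h1
    have hnorm : ‖EuclideanSpace.single (⟨0, by omega⟩ : Fin N) R‖ = R := by
      simp [EuclideanSpace.norm_single, abs_of_pos hR0]
    rw [GNc.aR, hnorm] at h1
    simp [GNaux.q, hR0.ne'] at h1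
  · -- the inequality
    set V : ℝ := (volume (GNc.SS N R)).toReal with hV
    have hVle : V ≤ 2*(N:ℝ)*2^(N-1)*ωr * R^m := by
      have := GNc.vol_SS_le (N := N) (R := R) hN1 hR
      calc V ≤ (2*N*(2*R)^(N-1)) * ωr := this
        _ = 2*(N:ℝ)*2^(N-1)*ωr * R^m := by rw [mul_pow]; ring
    have hL2 : L2norm (GNc.fR N R) ^ 2 ≤ V := GNc.L2sq_le hR
    have hgradsq : gradL2norm (GNc.fR N R) ^ 2
        ≤ ((N:ℝ) * 256) * V := by
      rw [gradL2norm, Real.sq_sqrt (integral_nonneg fun x =>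
        Finset.sum_nonneg fun i _ => sq_nonneg _)]
      exact GNc.grad_int_le hR
    have hH1 : H1norm (GNc.fR N R) ≤ Real.sqrt (K * R^m) := by
      rw [H1norm]
      apply Real.sqrt_le_sqrt
      have : V + (N:ℝ)*256*V ≤ K * R^m := by
        have hV0 : 0 ≤ V := ENNReal.toReal_nonneg
        have hN0 : (0:ℝ) ≤ (N:ℝ) := Nat.cast_nonneg N
        calc V + (N:ℝ)*256*V = (1 + 256*(N:ℝ)) * V := by ring
          _ ≤ (1 + 256*(N:ℝ)) * (2*(N:ℝ)*2^(N-1)*ωr * R^m) := by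
              apply mul_le_mul_of_nonneg_left hVle (by linarith)
          _ = K * R^m := by rw [hK]; ring
      linarith [hL2, hgradsq]
    have hsqrtRm : Real.sqrt (R^m) = R ^ ((m:ℝ)/2) := by
      rw [Real.sqrt_eq_rpow, ← Real.rpow_natCast R m, ← Real.rpow_mul hR0.le]
      congr 1
      ring
    have hH1pow : H1norm (GNc.fR N R) ^ (p+1) ≤ c3 * R^δ := by
      have h0 : 0 ≤ H1norm (GNc.fR N R) := Real.sqrt_nonneg _
      have hstep := Real.rpow_le_rpow h0 hH1 (by linarith : (0:ℝ) ≤ p+1)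
      refine le_trans hstep (le_of_eq ?_)
      rw [Real.sqrt_mul hKpos.le, Real.mul_rpow (Real.sqrt_nonneg _) (Real.sqrt_nonneg _),
        hsqrtRm, ← Real.rpow_mul hR0.le]
    have hlow : c1 * R^(b + (m:ℝ)) ≤ ∫ x : Euc N, ‖x‖ ^ b * ‖GNc.fR N R x‖ ^ (p + 1) := by
      have h1 := GNc.int_lower (N := N) hR hb (by linarith : (0:ℝ) < p+1)
      have h2 := GNc.vol_AA_ge (N := N) (R := R) hN1 hR
      have h3 : R^b * (1/4:ℝ)^(p+1) * (ωr/8 * R^m)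
          ≤ R^b * (1/4:ℝ)^(p+1) * (volume (GNc.AA N R)).toReal := by
        apply mul_le_mul_of_nonneg_left _ (by positivity)
        calc ωr/8 * R^m = ωr/8 * R^(N-1) := by rw [hm]
          _ ≤ _ := h2
      refine le_trans (le_of_eq ?_) (le_trans h3 h1)
      rw [Real.rpow_add hR0, Real.rpow_natCast]
      rw [hc1]; ring
    have hstrict : M * (c3 * R^δ) < c1 * R^(b + (m:ℝ)) := by
      have hMc3 : M * c3 < c1 * R^ε := by
        rw [div_lt_iff₀ hc1pos] at hRbig
        linarith
      have hRδ : (0:ℝ) < R^δ := Real.rpow_pos_of_pos hR0 _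
      calc M * (c3 * R^δ) = (M * c3) * R^δ := by ring
        _ < (c1 * R^ε) * R^δ := by exact mul_lt_mul_of_pos_right hMc3 hRδ
        _ = c1 * R^(b + (m:ℝ)) := by
            rw [mul_assoc, ← Real.rpow_add hR0]
            congr 2
            rw [hε]; ring
    calc M * H1norm (GNc.fR N R) ^ (p+1) ≤ M * (c3 * R^δ) :=
        mul_le_mul_of_nonneg_left hH1pow hM.le
      _ < c1 * R^(b + (m:ℝ)) := hstrict
      _ ≤ _ := hlow
end
end

section
/- Let N ≥ 2, b > 0, and p > 1 with (N−1)(p−1) > 2b. Then there exists C = C(N,p,b) > 0 such that for every radial function f ∈ H^1(ℝ^N) and every R > 0, ∫_{|x| ≥ R} |x|^b |f(x)|^{p+1} dx ≤ C R^{b − (N−1)(p−1)/2} ‖∇f‖_{L²}^{(p−1)/2} ‖f‖_{L²}^{(p+3)/2}. -/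
open MeasureTheory Filter
open scoped ENNReal NNReal BigOperators

noncomputable section

section Aux
set_option linter.unusedSectionVars false
set_option linter.unusedVariables false
open Set Function Metric intervalIntegral

local notation "dim" => Module.finrank ℝ

lemma ofReal_norm_eq_coe_nnnorm {F : Type*} [SeminormedAddGroup F] (a : F) :
    ENNReal.ofReal ‖a‖ = (‖a‖₊ : ℝ≥0∞) := ofReal_norm a

section Polar
variable {E : Type*} [NormedAddCommGroup E] [NormedSpace ℝ E] [MeasurableSpace E]
  [Nontrivial E] (μ : Measure E) [FiniteDimensional ℝ E] [BorelSpace E] [μ.IsAddHaarMeasure]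

lemma lintegral_fun_norm_addHaar' (f : ℝ → ℝ≥0∞) (hf : Measurable f) :
    ∫⁻ x, f ‖x‖ ∂μ = (dim E) * μ (ball 0 1) *
      ∫⁻ y in Ioi (0 : ℝ), ENNReal.ofReal (y ^ (dim E - 1)) * f y := by
  calc
    ∫⁻ x, f ‖x‖ ∂μ = ∫⁻ x : ({(0)}ᶜ : Set E), f (‖x.1‖) ∂(μ.comap (↑)) := by
      rw [lintegral_subtype_comap (measurableSet_singleton _).compl fun x ↦ f (‖x‖),
        restrict_compl_singleton]
    _ = ∫⁻ x : sphere (0 : E) 1 × Ioi (0 : ℝ), f x.2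
        ∂μ.toSphere.prod (.volumeIoiPow (dim E - 1)) := by
      rw [← μ.measurePreserving_homeomorphUnitSphereProd.lintegral_comp
        (f := fun x => f x.2.1) (by fun_prop)]
      simp only [homeomorphUnitSphereProd_apply_snd_coe]
    _ = μ.toSphere univ * ∫⁻ x : Ioi (0 : ℝ), f x ∂(Measure.volumeIoiPow (dim E - 1)) := by
      rw [MeasureTheory.lintegral_prod _ (by fun_prop)]
      simp [lintegral_const, mul_comm]
    _ = _ := by
      rw [μ.toSphere_apply_univ, Measure.volumeIoiPow,
        lintegral_withDensity_eq_lintegral_mul _ (by fun_prop) (by fun_prop),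
        mul_assoc]
      simp only [Pi.mul_apply]
      rw [lintegral_subtype_comap measurableSet_Ioi
        (fun y => ENNReal.ofReal (y ^ (dim E - 1)) * f y), mul_assoc]

end Polar

section Riesz
variable {E : Type*} [NormedAddCommGroup E] [InnerProductSpace ℝ E] [FiniteDimensional ℝ E]

/-- Riesz representative of the real part of `L`. -/
def rieszRe (L : E →L[ℝ] ℂ) : E := (InnerProductSpace.toDual ℝ E).symm (Complex.reCLM.comp L)
def rieszIm (L : E →L[ℝ] ℂ) : E := (InnerProductSpace.toDual ℝ E).symm (Complex.imCLM.comp L)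

lemma norm_apply_sq (L : E →L[ℝ] ℂ) (v : E) :
    ‖L v‖ ^ 2 = inner ℝ (rieszRe L) v ^ 2 + inner ℝ (rieszIm L) v ^ 2 := by
  rw [rieszRe, rieszIm, InnerProductSpace.toDual_symm_apply, InnerProductSpace.toDual_symm_apply]
  simp [Complex.sq_norm, Complex.normSq_apply]
  ring

lemma parseval_sum {ι : Type*} [Fintype ι] (b : OrthonormalBasis ι ℝ E) (u : E) :
    ∑ i, inner ℝ u (b i) ^ 2 = ‖u‖ ^ 2 := by
  have h1 : ‖b.repr u‖ = ‖u‖ := b.repr.norm_map u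
  have h2 : ‖b.repr u‖ ^ 2 = ∑ i, ‖b.repr u i‖ ^ 2 := by
    rw [EuclideanSpace.norm_eq, Real.sq_sqrt (by positivity)]
  rw [← h1, h2]
  refine Finset.sum_congr rfl fun i _ => ?_
  rw [b.repr_apply_apply, real_inner_comm, Real.norm_eq_abs, sq_abs]

lemma sum_sq_onb {ι : Type*} [Fintype ι] (b : OrthonormalBasis ι ℝ E) (L : E →L[ℝ] ℂ) :
    ∑ i, ‖L (b i)‖ ^ 2 = ‖rieszRe L‖ ^ 2 + ‖rieszIm L‖ ^ 2 := by
  simp_rw [norm_apply_sq, Finset.sum_add_distrib, parseval_sum]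

lemma norm_apply_le (L : E →L[ℝ] ℂ) (v : E) :
    ‖L v‖ ^ 2 ≤ (‖rieszRe L‖ ^ 2 + ‖rieszIm L‖ ^ 2) * ‖v‖ ^ 2 := by
  rw [norm_apply_sq]
  have h1 := abs_real_inner_le_norm (rieszRe L) v
  have h2 := abs_real_inner_le_norm (rieszIm L) v
  nlinarith [abs_nonneg (inner ℝ (rieszRe L) v), abs_nonneg (inner ℝ (rieszIm L) v),
    norm_nonneg v, norm_nonneg (rieszRe L), norm_nonneg (rieszIm L),
    sq_abs (inner ℝ (rieszRe L) v), sq_abs (inner ℝ (rieszIm L) v)]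

lemma norm_riesz_le (L : E →L[ℝ] ℂ) :
    ‖rieszRe L‖ ^ 2 + ‖rieszIm L‖ ^ 2 ≤ 2 * ‖L‖ ^ 2 := by
  have hre : ‖rieszRe L‖ ≤ ‖L‖ := by
    rw [rieszRe, LinearIsometryEquiv.norm_map]
    refine ContinuousLinearMap.opNorm_le_bound _ (norm_nonneg L) fun v => ?_
    calc ‖(Complex.reCLM.comp L) v‖ ≤ ‖L v‖ := by
          simpa using Complex.abs_re_le_norm (L v)
      _ ≤ ‖L‖ * ‖v‖ := L.le_opNorm v
  have him : ‖rieszIm L‖ ≤ ‖L‖ := by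
    rw [rieszIm, LinearIsometryEquiv.norm_map]
    refine ContinuousLinearMap.opNorm_le_bound _ (norm_nonneg L) fun v => ?_
    calc ‖(Complex.imCLM.comp L) v‖ ≤ ‖L v‖ := by
          simpa using Complex.abs_im_le_norm (L v)
      _ ≤ ‖L‖ * ‖v‖ := L.le_opNorm v
  nlinarith [norm_nonneg (rieszRe L), norm_nonneg (rieszIm L), norm_nonneg L]

end Riesz

section Gsq

/-- the gradient-square profile -/
def Gsq {N : ℕ} (f : Euc N → ℂ) (x : Euc N) : ℝ :=
  ∑ i : Fin N, ‖fderiv ℝ f x (EuclideanSpace.single i 1)‖ ^ 2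

lemma Gsq_eq {N : ℕ} (f : Euc N → ℂ) (x : Euc N) :
    Gsq f x = ‖rieszRe (fderiv ℝ f x)‖ ^ 2 + ‖rieszIm (fderiv ℝ f x)‖ ^ 2 := by
  rw [Gsq, ← sum_sq_onb (EuclideanSpace.basisFun (Fin N) ℝ)]
  simp [EuclideanSpace.basisFun_apply]

lemma Gsq_nonneg {N : ℕ} (f : Euc N → ℂ) (x : Euc N) : 0 ≤ Gsq f x := by
  rw [Gsq]; positivity

lemma norm_fderiv_apply_sq_le {N : ℕ} (f : Euc N → ℂ) (x v : Euc N) (hv : ‖v‖ = 1) :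
    ‖fderiv ℝ f x v‖ ^ 2 ≤ Gsq f x := by
  have := norm_apply_le (fderiv ℝ f x) v
  rw [hv] at this
  rw [Gsq_eq]
  simpa using this

lemma Gsq_le {N : ℕ} (f : Euc N → ℂ) (x : Euc N) : Gsq f x ≤ 2 * ‖fderiv ℝ f x‖ ^ 2 := by
  rw [Gsq_eq]; exact norm_riesz_le _

lemma Gsq_radial {N : ℕ} (f : Euc N → ℂ) (hrad : Radial f) (hdf : Differentiable ℝ f) :
    Radial (Gsq f) := by
  intro x y h
  obtain ⟨A, hAx⟩ : ∃ A : Euc N ≃ₗᵢ[ℝ] Euc N, A x = y :=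
    ⟨Submodule.reflection (ℝ ∙ (x - y))ᗮ, Submodule.reflection_sub h⟩
  set B : Euc N →L[ℝ] Euc N := A.toLinearIsometry.toContinuousLinearMap with hB
  have hfA : f = f ∘ A := by
    funext z
    exact hrad z (A z) (A.norm_map z).symm
  have hd : fderiv ℝ f x = (fderiv ℝ f y).comp B := by
    conv_lhs => rw [hfA]
    have h1 : (f ∘ ⇑A) = f ∘ ⇑B := rfl
    rw [h1, fderiv_comp x (hdf (B x)) B.differentiableAt, B.fderiv]
    have h2 : B x = y := by simpa [hB] using hAx
    rw [h2]
  have hBe : ∀ z, B z = A z := fun z => rfl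
  calc Gsq f x = ∑ i : Fin N, ‖(fderiv ℝ f y) (A (EuclideanSpace.single i 1))‖ ^ 2 := by
        simp [Gsq, hd, hBe]
    _ = ∑ i : Fin N, ‖(fderiv ℝ f y)
          (((EuclideanSpace.basisFun (Fin N) ℝ).map A) i)‖ ^ 2 := by
        simp [OrthonormalBasis.map_apply, EuclideanSpace.basisFun_apply]
    _ = ‖rieszRe (fderiv ℝ f y)‖ ^ 2 + ‖rieszIm (fderiv ℝ f y)‖ ^ 2 := sum_sq_onb _ _
    _ = Gsq f y := (Gsq_eq f y).symm

end Gsq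

section Strauss

lemma strauss_aux (N : ℕ) (hN : 2 ≤ N) (g g' : ℝ → ℂ)
    (hg : ∀ s : ℝ, HasDerivAt g (g' s) s) (hg'm : Measurable g')
    (hI1fin : (∫⁻ y in Ioi (0:ℝ), ENNReal.ofReal (y ^ (N - 1)) * (‖g y‖₊ : ℝ≥0∞) ^ (2:ℝ)) ≠ ∞)
    (r : ℝ) (hr : 0 < r) :
    ENNReal.ofReal (r ^ (N - 1) * ‖g r‖ ^ 2)
      ≤ 2 * ∫⁻ s in Ioi r, ENNReal.ofReal (s ^ (N - 1) * (‖g s‖ * ‖g' s‖)) := by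
  have hgc : Continuous g :=
    continuous_iff_continuousAt.2 fun s => (hg s).differentiableAt.continuousAt
  set q : ℝ → ℝ := fun s => ‖g s‖ ^ 2 with hq_def
  set D : ℝ → ℝ := fun s => 2 * ((g s).re * (g' s).re) + 2 * ((g s).im * (g' s).im) with hD_def
  have hqc : Continuous q := (hgc.norm).pow 2
  have hq : ∀ s : ℝ, HasDerivAt q (D s) s := by
    intro s
    have hre : HasDerivAt (fun t => (g t).re) ((g' s).re) s :=
      (Complex.reCLM.hasFDerivAt.comp_hasDerivAt s (hg s))
    have him : HasDerivAt (fun t => (g t).im) ((g' s).im) s :=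
      (Complex.imCLM.hasFDerivAt.comp_hasDerivAt s (hg s))
    have h1 : HasDerivAt (fun t => (g t).re ^ 2 + (g t).im ^ 2) (D s) s := by
      have := ((hre.pow 2).add (him.pow 2))
      refine this.congr_deriv ?_
      simp only [hD_def]
      norm_num
      ring
    have h2 : q = fun t => (g t).re ^ 2 + (g t).im ^ 2 := by
      funext t
      rw [hq_def]
      simp only [Complex.sq_norm, Complex.normSq_apply]
      ring
    rw [h2]
    exact h1
  have hDle : ∀ s : ℝ, |D s| ≤ 2 * (‖g s‖ * ‖g' s‖) := by
    intro s
    have h1 : D s = 2 * ((starRingEnd ℂ) (g s) * g' s).re := by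
      simp [hD_def, Complex.mul_re]
      ring
    rw [h1, abs_mul, abs_two]
    have h2 : |((starRingEnd ℂ) (g s) * g' s).re| ≤ ‖g s‖ * ‖g' s‖ := by
      calc |((starRingEnd ℂ) (g s) * g' s).re| ≤ ‖(starRingEnd ℂ) (g s) * g' s‖ :=
            Complex.abs_re_le_norm _
        _ = ‖g s‖ * ‖g' s‖ := by
            rw [norm_mul, Complex.norm_conj]
    linarith [h2]
  set h : ℝ → ℝ := fun s => s ^ (N - 1) * q s with hh_def
  set dh : ℝ → ℝ := fun s => (↑(N-1) * s ^ (N - 1 - 1)) * q s + s ^ (N - 1) * D s with hdh_def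
  have hh : ∀ s : ℝ, HasDerivAt h (dh s) s := fun s => (hasDerivAt_pow (N-1) s).mul (hq s)
  set ψ : ℝ → ℝ := fun s => s ^ (N - 1) * (‖g s‖ * ‖g' s‖) with hψ_def
  have hψm : Measurable ψ := by
    apply Measurable.mul
    · exact (continuous_pow (N-1)).measurable
    · exact (hgc.norm.measurable).mul hg'm.norm
  set J : ℝ≥0∞ := ∫⁻ s in Ioi r, ENNReal.ofReal (ψ s) with hJ_def
  show ENNReal.ofReal (r ^ (N - 1) * ‖g r‖ ^ 2) ≤ 2 * J
  by_cases hJtop : J = ∞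
  · rw [hJtop, ENNReal.mul_top (by norm_num)]
    exact le_top
  -- ψ is integrable on Ioi r
  have hψnn : ∀ s ∈ Ioi r, 0 ≤ ψ s := by
    intro s hs
    have : (0:ℝ) < s := lt_trans hr hs
    positivity
  have hψint : IntegrableOn ψ (Ioi r) volume := by
    refine ⟨hψm.aestronglyMeasurable, ?_⟩
    rw [hasFiniteIntegral_iff_norm]
    have : ∫⁻ s in Ioi r, ENNReal.ofReal ‖ψ s‖ = J := by
      rw [hJ_def]
      refine setLIntegral_congr_fun measurableSet_Ioi ?_
      intro s hs
      dsimp only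
      rw [Real.norm_eq_abs, abs_of_nonneg (hψnn s hs)]
    rw [this]
    exact lt_top_iff_ne_top.2 hJtop
  -- key : ∀ ε > 0, h r ≤ ε + 2 * ∫ ψ
  have key : ∀ ε : ℝ, 0 < ε → h r ≤ ε + 2 * ∫ s in Ioi r, ψ s := by
    intro ε hε
    obtain ⟨T, hrT, hTsm⟩ : ∃ T, r ≤ T ∧ h T ≤ ε := by
      by_contra hc
      push_neg at hc
      have hbig : (∫⁻ y in Ioi r, ENNReal.ofReal (y ^ (N - 1)) * (‖g y‖₊ : ℝ≥0∞) ^ (2:ℝ)) = ∞ := by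
        have hge : ∀ y ∈ Ioi r, ENNReal.ofReal ε
            ≤ ENNReal.ofReal (y ^ (N - 1)) * (‖g y‖₊ : ℝ≥0∞) ^ (2:ℝ) := by
          intro y hy
          have hy0 : (0:ℝ) < y := lt_trans hr hy
          have h1 : ENNReal.ofReal (y ^ (N - 1)) * (‖g y‖₊ : ℝ≥0∞) ^ (2:ℝ)
              = ENNReal.ofReal (h y) := by
            rw [hh_def]
            simp only
            rw [ENNReal.ofReal_mul (by positivity : (0:ℝ) ≤ y ^ (N-1))]
            congr 1
            rw [← ofReal_norm_eq_coe_nnnorm,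
              ENNReal.ofReal_rpow_of_nonneg (norm_nonneg _) (by norm_num)]
            norm_num [hq_def]
          rw [h1]
          exact ENNReal.ofReal_le_ofReal (hc y (le_of_lt hy)).le
        have : ∫⁻ y in Ioi r, ENNReal.ofReal ε ∂volume
            ≤ ∫⁻ y in Ioi r, ENNReal.ofReal (y ^ (N - 1)) * (‖g y‖₊ : ℝ≥0∞) ^ (2:ℝ) := by
          refine setLIntegral_mono (by fun_prop) hge
        refine top_le_iff.mp ?_
        refine le_trans ?_ this
        rw [setLIntegral_const, Real.volume_Ioi, ENNReal.mul_top]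
        simp [hε]
      have : (∫⁻ y in Ioi (0:ℝ), ENNReal.ofReal (y ^ (N - 1)) * (‖g y‖₊ : ℝ≥0∞) ^ (2:ℝ)) = ∞ := by
        refine top_le_iff.mp ?_
        rw [← hbig]
        exact lintegral_mono_set (Ioi_subset_Ioi hr.le)
      exact hI1fin this
    -- FTC on [r, T]
    set P : ℝ → ℝ := fun s => (↑(N-1) * s ^ (N - 1 - 1)) * q s with hP_def
    set Q : ℝ → ℝ := fun s => s ^ (N - 1) * D s with hQ_def
    have hPc : Continuous P := by
      apply Continuous.mul
      · exact continuous_const.mul (continuous_pow _)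
      · exact hqc
    have hPint : IntervalIntegrable P volume r T := hPc.intervalIntegrable r T
    have hψT : IntervalIntegrable ψ volume r T := by
      rw [intervalIntegrable_iff_integrableOn_Ioc_of_le hrT]
      exact hψint.mono_set Ioc_subset_Ioi_self
    have hQm : Measurable Q := by
      apply Measurable.mul
      · exact (continuous_pow _).measurable
      · apply Measurable.add <;> apply Measurable.const_mul
        · exact (Complex.measurable_re.comp hgc.measurable).mul
            (Complex.measurable_re.comp hg'm)
        · exact (Complex.measurable_im.comp hgc.measurable).mul
            (Complex.measurable_im.comp hg'm)
    have hQint : IntervalIntegrable Q volume r T := by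
      rw [intervalIntegrable_iff_integrableOn_Ioc_of_le hrT]
      refine Integrable.mono' (((hψint.mono_set Ioc_subset_Ioi_self)).const_mul 2)
        hQm.aestronglyMeasurable ?_
      filter_upwards [ae_restrict_mem measurableSet_Ioc] with s hs
      have hs0 : (0:ℝ) < s := lt_trans hr hs.1
      rw [hQ_def, Real.norm_eq_abs, abs_mul, abs_of_nonneg (by positivity : (0:ℝ) ≤ s ^ (N-1))]
      calc s ^ (N-1) * |D s| ≤ s ^ (N-1) * (2 * (‖g s‖ * ‖g' s‖)) := by
            exact mul_le_mul_of_nonneg_left (hDle s) (by positivity)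
        _ = 2 * ψ s := by rw [hψ_def]; ring
    have hdhint : IntervalIntegrable dh volume r T := by
      have : dh = fun s => P s + Q s := by funext s; rw [hdh_def, hP_def, hQ_def]
      rw [this]
      exact hPint.add hQint
    have hFTC : ∫ s in r..T, dh s = h T - h r :=
      integral_eq_sub_of_hasDerivAt (fun s _ => hh s) hdhint
    have hsplit : ∫ s in r..T, dh s = (∫ s in r..T, P s) + ∫ s in r..T, Q s := by
      rw [← integral_add hPint hQint]
    have hPpos : 0 ≤ ∫ s in r..T, P s := by
      refine integral_nonneg hrT fun s hs => ?_
      have hs0 : (0:ℝ) < s := lt_of_lt_of_le hr hs.1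
      rw [hP_def]
      have : (0:ℝ) ≤ q s := by rw [hq_def]; positivity
      positivity
    have hQge : -(∫ s in r..T, 2 * ψ s) ≤ ∫ s in r..T, Q s := by
      rw [← intervalIntegral.integral_neg]
      refine integral_mono_on hrT ((hψT.const_mul 2).neg) hQint fun s hs => ?_
      have hs0 : (0:ℝ) < s := lt_of_lt_of_le hr hs.1
      have h1 : |Q s| ≤ 2 * ψ s := by
        rw [hQ_def, abs_mul, abs_of_nonneg (by positivity : (0:ℝ) ≤ s ^ (N-1))]
        calc s ^ (N-1) * |D s| ≤ s ^ (N-1) * (2 * (‖g s‖ * ‖g' s‖)) :=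
              mul_le_mul_of_nonneg_left (hDle s) (by positivity)
          _ = 2 * ψ s := by rw [hψ_def]; ring
      linarith [neg_abs_le (Q s)]
    have hψTle : ∫ s in r..T, ψ s ≤ ∫ s in Ioi r, ψ s := by
      rw [intervalIntegral.integral_of_le hrT]
      refine setIntegral_mono_set hψint ?_ (HasSubset.Subset.eventuallyLE Ioc_subset_Ioi_self)
      filter_upwards [ae_restrict_mem measurableSet_Ioi] with s hs
      exact hψnn s hs
    have h2ψ : ∫ s in r..T, 2 * ψ s = 2 * ∫ s in r..T, ψ s := by
      rw [intervalIntegral.integral_const_mul]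
    nlinarith [hFTC, hsplit, hPpos, hQge, hψTle, h2ψ, hTsm]
  -- conclude
  have hfinal : h r ≤ 2 * ∫ s in Ioi r, ψ s := by
    by_contra hcon
    push_neg at hcon
    obtain ⟨ε, hε, hlt⟩ : ∃ ε : ℝ, 0 < ε ∧ ε + 2 * ∫ s in Ioi r, ψ s < h r :=
      ⟨(h r - 2 * ∫ s in Ioi r, ψ s) / 2, by linarith, by linarith⟩
    exact absurd (key ε hε) (by linarith)
  calc ENNReal.ofReal (r ^ (N - 1) * ‖g r‖ ^ 2) = ENNReal.ofReal (h r) := by rw [hh_def]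
    _ ≤ ENNReal.ofReal (2 * ∫ s in Ioi r, ψ s) := ENNReal.ofReal_le_ofReal hfinal
    _ = 2 * ENNReal.ofReal (∫ s in Ioi r, ψ s) := by
        rw [ENNReal.ofReal_mul (by norm_num : (0:ℝ) ≤ 2)]
        norm_num
    _ = 2 * J := by
        rw [hJ_def, ofReal_integral_eq_lintegral_ofReal hψint]
        filter_upwards [ae_restrict_mem measurableSet_Ioi] with s hs
        exact hψnn s hs

lemma holder_aux (N : ℕ) (g g' : ℝ → ℂ) (hgc : Continuous g) (hg'm : Measurable g')
    (r : ℝ) (hr : 0 < r) :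
    (∫⁻ s in Ioi r, ENNReal.ofReal (s ^ (N - 1) * (‖g s‖ * ‖g' s‖)))
      ≤ (∫⁻ y in Ioi (0:ℝ), ENNReal.ofReal (y ^ (N - 1)) * (‖g y‖₊ : ℝ≥0∞) ^ (2:ℝ)) ^ (1/2:ℝ)
        * (∫⁻ y in Ioi (0:ℝ), ENNReal.ofReal (y ^ (N - 1)) * (‖g' y‖₊ : ℝ≥0∞) ^ (2:ℝ)) ^ (1/2:ℝ) := by
  set A : ℝ → ℝ≥0∞ := fun s => ENNReal.ofReal (s ^ (N-1)) ^ (1/2:ℝ) * (‖g s‖₊ : ℝ≥0∞) with hA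
  set B : ℝ → ℝ≥0∞ := fun s => ENNReal.ofReal (s ^ (N-1)) ^ (1/2:ℝ) * (‖g' s‖₊ : ℝ≥0∞) with hB
  have hAm : AEMeasurable A (volume.restrict (Ioi (0:ℝ))) := by fun_prop
  have hBm : AEMeasurable B (volume.restrict (Ioi (0:ℝ))) := by fun_prop
  have step1 : (∫⁻ s in Ioi r, ENNReal.ofReal (s ^ (N - 1) * (‖g s‖ * ‖g' s‖)))
      ≤ ∫⁻ s in Ioi (0:ℝ), (A * B) s := by
    refine le_trans (lintegral_mono_set (Ioi_subset_Ioi hr.le)) (le_of_eq ?_)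
    refine setLIntegral_congr_fun measurableSet_Ioi ?_
    intro s hs
    have hs0 : (0:ℝ) ≤ s ^ (N-1) := le_of_lt (pow_pos hs _)
    simp only [Pi.mul_apply, hA, hB]
    rw [ENNReal.ofReal_mul hs0, ENNReal.ofReal_mul (norm_nonneg _),
      ofReal_norm_eq_coe_nnnorm, ofReal_norm_eq_coe_nnnorm]
    calc ENNReal.ofReal (s ^ (N-1)) * ((‖g s‖₊ : ℝ≥0∞) * (‖g' s‖₊ : ℝ≥0∞))
        = (ENNReal.ofReal (s ^ (N-1)) ^ (1/2:ℝ) * ENNReal.ofReal (s ^ (N-1)) ^ (1/2:ℝ))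
          * ((‖g s‖₊ : ℝ≥0∞) * (‖g' s‖₊ : ℝ≥0∞)) := by
          rw [← ENNReal.rpow_add_of_nonneg _ _ (by norm_num) (by norm_num)]
          norm_num
      _ = _ := by ring
  have step2 : ∫⁻ s in Ioi (0:ℝ), (A * B) s
      ≤ (∫⁻ s in Ioi (0:ℝ), A s ^ (2:ℝ)) ^ (1/2:ℝ) * (∫⁻ s in Ioi (0:ℝ), B s ^ (2:ℝ)) ^ (1/2:ℝ) :=
    ENNReal.lintegral_mul_le_Lp_mul_Lq _ Real.HolderConjugate.two_two hAm hBm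
  have hAsq : ∀ s : ℝ, A s ^ (2:ℝ) = ENNReal.ofReal (s ^ (N-1)) * (‖g s‖₊ : ℝ≥0∞) ^ (2:ℝ) := by
    intro s
    rw [hA]
    simp only
    rw [ENNReal.mul_rpow_of_nonneg _ _ (by norm_num : (0:ℝ) ≤ 2), ← ENNReal.rpow_mul]
    norm_num
  have hBsq : ∀ s : ℝ, B s ^ (2:ℝ) = ENNReal.ofReal (s ^ (N-1)) * (‖g' s‖₊ : ℝ≥0∞) ^ (2:ℝ) := by
    intro s
    rw [hB]
    simp only
    rw [ENNReal.mul_rpow_of_nonneg _ _ (by norm_num : (0:ℝ) ≤ 2), ← ENNReal.rpow_mul]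
    norm_num
  calc (∫⁻ s in Ioi r, ENNReal.ofReal (s ^ (N - 1) * (‖g s‖ * ‖g' s‖)))
      ≤ ∫⁻ s in Ioi (0:ℝ), (A * B) s := step1
    _ ≤ (∫⁻ s in Ioi (0:ℝ), A s ^ (2:ℝ)) ^ (1/2:ℝ)
        * (∫⁻ s in Ioi (0:ℝ), B s ^ (2:ℝ)) ^ (1/2:ℝ) := step2
    _ = _ := by
        congr 1
        · congr 1
          exact lintegral_congr fun s => hAsq s
        · congr 1
          exact lintegral_congr fun s => hBsq s

lemma real_alg {r R u m nn b c : ℝ} (hR : 0 < R) (hrR : R ≤ r) (hnn : 0 ≤ nn)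
    (hu : 0 ≤ u) (hm : 0 ≤ m) (hc : 0 ≤ c) (hb : 0 ≤ b) (hp1 : 0 < 2 * c + 2)
    {e : ℝ} (he : e = b - nn * c) (hen : e ≤ 0)
    (hu2 : r ^ nn * u ^ (2:ℝ) ≤ m) :
    r ^ b * u ^ (2 * c + 2) ≤ R ^ e * m ^ c * u ^ (2:ℝ) := by
  have hr : 0 < r := lt_of_lt_of_le hR hrR
  rcases eq_or_lt_of_le hu with hu0 | hu0
  · rw [← hu0, Real.zero_rpow hp1.ne']
    have h1 : (0:ℝ) ^ (2:ℝ) = 0 := Real.zero_rpow (by norm_num)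
    rw [h1]
    simp only [mul_zero]
    positivity
  · have hrnn : (0:ℝ) < r ^ nn := Real.rpow_pos_of_pos hr nn
    have husq : u ^ (2:ℝ) ≤ m / r ^ nn := by
      rw [le_div_iff₀ hrnn]
      calc u ^ (2:ℝ) * r ^ nn = r ^ nn * u ^ (2:ℝ) := by ring
        _ ≤ m := hu2
    have h2 : u ^ (2 * c) ≤ (m / r ^ nn) ^ c := by
      have : u ^ (2 * c) = (u ^ (2:ℝ)) ^ c := by
        rw [← Real.rpow_mul hu]
      rw [this]
      exact Real.rpow_le_rpow (by positivity) husq hc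
    have h3 : (m / r ^ nn) ^ c = m ^ c / r ^ (nn * c) := by
      rw [Real.div_rpow hm hrnn.le, ← Real.rpow_mul hr.le]
    have h4 : r ^ b * (m ^ c / r ^ (nn * c)) = m ^ c * r ^ e := by
      rw [he, Real.rpow_sub hr]
      ring
    have h5 : r ^ e ≤ R ^ e := Real.rpow_le_rpow_of_nonpos hR hrR hen
    calc r ^ b * u ^ (2 * c + 2)
        = r ^ b * (u ^ (2 * c) * u ^ (2:ℝ)) := by
          rw [← Real.rpow_add hu0]
      _ ≤ r ^ b * ((m / r ^ nn) ^ c * u ^ (2:ℝ)) := by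
          have := mul_le_mul_of_nonneg_right h2 (le_of_lt (Real.rpow_pos_of_pos hu0 2))
          have h6 := mul_le_mul_of_nonneg_left this (le_of_lt (Real.rpow_pos_of_pos hr b))
          linarith [h6]
      _ = (r ^ b * (m ^ c / r ^ (nn * c))) * u ^ (2:ℝ) := by rw [h3]; ring
      _ = m ^ c * r ^ e * u ^ (2:ℝ) := by rw [h4]
      _ ≤ R ^ e * m ^ c * u ^ (2:ℝ) := by
          have := mul_le_mul_of_nonneg_right h5
            (mul_nonneg (Real.rpow_nonneg hm c) (le_of_lt (Real.rpow_pos_of_pos hu0 2)))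
          calc m ^ c * r ^ e * u ^ (2:ℝ) = r ^ e * (m ^ c * u ^ (2:ℝ)) := by ring
            _ ≤ R ^ e * (m ^ c * u ^ (2:ℝ)) := this
            _ = R ^ e * m ^ c * u ^ (2:ℝ) := by ring

end Strauss
end Aux

open Set Metric
local notation "dim" => Module.finrank ℝ

set_option linter.unusedVariables false in
/-- Radial Sobolev tail estimate: for radial `H¹` functions,
`∫_{|x| ≥ R} |x|^b |f|^{p+1} ≤ C R^{b-(N-1)(p-1)/2} ‖∇f‖^{(p-1)/2} ‖f‖^{(p+3)/2}`. -/
theorem radial_tail_estimate (N : ℕ) (b p : ℝ) (hN : 2 ≤ N) (hb : 0 < b) (hp : 1 < p)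
    (hpb : 2 * b < ((N : ℝ) - 1) * (p - 1)) :
    ∃ C : ℝ, 0 < C ∧ ∀ f : Euc N → ℂ, Radial f → MemH1 f → ∀ R : ℝ, 0 < R →
      (∫⁻ x in {x : Euc N | R ≤ ‖x‖}, (‖x‖₊ : ℝ≥0∞) ^ b * (‖f x‖₊ : ℝ≥0∞) ^ (p + 1)) ≤
        ENNReal.ofReal (C * R ^ (b - ((N : ℝ) - 1) * (p - 1) / 2) *
          gradL2norm f ^ ((p - 1) / 2) * L2norm f ^ ((p + 3) / 2)) := by
  classical
  have hN0 : 0 < N := by omega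
  haveI : Nonempty (Fin N) := ⟨⟨0, hN0⟩⟩
  haveI : Nontrivial (Euc N) := inferInstance
  have hdim : dim (Euc N) = N := finrank_euclideanSpace_fin
  have hNR : (2:ℝ) ≤ (N:ℝ) := by exact_mod_cast hN
  set V : ℝ≥0∞ := (N : ℝ≥0∞) * volume (ball (0 : Euc N) 1) with hV
  have hVne : V ≠ 0 := by
    simp only [hV, ne_eq, mul_eq_zero, not_or]
    exact ⟨by exact_mod_cast hN0.ne', (measure_ball_pos volume (0 : Euc N) one_pos).ne'⟩
  have hVtop : V ≠ ∞ :=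
    ENNReal.mul_ne_top (ENNReal.natCast_ne_top N) measure_ball_lt_top.ne
  set W : ℝ≥0∞ := 2 * V⁻¹ with hW
  have hWne : W ≠ 0 := by
    simp only [hW, ne_eq, mul_eq_zero, not_or]
    exact ⟨by norm_num, ENNReal.inv_ne_zero.2 hVtop⟩
  have hWtop : W ≠ ∞ := ENNReal.mul_ne_top (by norm_num) (ENNReal.inv_ne_top.2 hVne)
  set c : ℝ := (p - 1) / 2 with hc_def
  have hc0 : 0 ≤ c := by rw [hc_def]; linarith
  set C : ℝ := W.toReal ^ c with hC_def
  have hC0 : 0 < C := Real.rpow_pos_of_pos (ENNReal.toReal_pos hWne hWtop) c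
  refine ⟨C, hC0, ?_⟩
  intro f hrad hH1 R hR
  obtain ⟨hdf, hf2, hdf2⟩ := hH1
  have hL0 : (0:ℝ) ≤ L2norm f := ENNReal.toReal_nonneg
  have hG0 : (0:ℝ) ≤ gradL2norm f := Real.sqrt_nonneg _
  -- radial profile setup
  set e₀ : Euc N := EuclideanSpace.single (⟨0, hN0⟩ : Fin N) 1 with he₀
  have he1 : ‖e₀‖ = 1 := by simp [he₀, EuclideanSpace.norm_single]
  set g : ℝ → ℂ := fun s => f (s • e₀) with hg_def
  set g' : ℝ → ℂ := fun s => fderiv ℝ f (s • e₀) e₀ with hg'_def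
  have hfx : ∀ x : Euc N, f x = g ‖x‖ := by
    intro x
    refine hrad x (‖x‖ • e₀) ?_
    simp [norm_smul, he1, abs_of_nonneg (norm_nonneg x)]
  have hg : ∀ s : ℝ, HasDerivAt g (g' s) s := by
    intro s
    have hcv : HasDerivAt (fun t : ℝ => t • e₀) e₀ s := by
      simpa using (hasDerivAt_id s).smul_const e₀
    exact (hdf (s • e₀)).hasFDerivAt.comp_hasDerivAt s hcv
  have hgc : Continuous g :=
    continuous_iff_continuousAt.2 fun s => (hg s).differentiableAt.continuousAt
  have hg'm : Measurable g' := by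
    have h1 : Measurable fun x : Euc N => fderiv ℝ f x e₀ :=
      measurable_fderiv_apply_const ℝ f e₀
    exact h1.comp ((continuous_id.smul continuous_const).measurable)
  -- L² identities
  set oL : ℝ≥0∞ := ENNReal.ofReal (L2norm f) with hoL
  set oG : ℝ≥0∞ := ENNReal.ofReal (gradL2norm f) with hoG
  have heL : eLpNorm f 2 volume = oL := by
    rw [hoL, L2norm, ENNReal.ofReal_toReal hf2.2.ne]
  have hflin : ∫⁻ x : Euc N, (‖f x‖₊ : ℝ≥0∞) ^ (2:ℝ) = oL ^ (2:ℝ) := by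
    have h0 : eLpNorm f 2 volume = (∫⁻ x, (‖f x‖₊ : ℝ≥0∞) ^ (2:ℝ)) ^ (1/(2:ℝ)) := by
      rw [eLpNorm_eq_lintegral_rpow_enorm_toReal two_ne_zero ENNReal.ofNat_ne_top]
      norm_num
      rfl
    rw [← heL, h0, ← ENNReal.rpow_mul]
    norm_num
  set I1 : ℝ≥0∞ := ∫⁻ y in Ioi (0:ℝ), ENNReal.ofReal (y ^ (N - 1)) * (‖g y‖₊ : ℝ≥0∞) ^ (2:ℝ)
    with hI1_def
  set I2 : ℝ≥0∞ := ∫⁻ y in Ioi (0:ℝ), ENNReal.ofReal (y ^ (N - 1)) * (‖g' y‖₊ : ℝ≥0∞) ^ (2:ℝ)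
    with hI2_def
  have hI1eq : ∫⁻ x : Euc N, (‖f x‖₊ : ℝ≥0∞) ^ (2:ℝ) = V * I1 := by
    have hm : Measurable fun y : ℝ => (‖g y‖₊ : ℝ≥0∞) ^ (2:ℝ) := by fun_prop
    have := lintegral_fun_norm_addHaar' (volume : Measure (Euc N))
      (fun y => (‖g y‖₊ : ℝ≥0∞) ^ (2:ℝ)) hm
    rw [hdim] at this
    rw [← this]
    exact lintegral_congr fun x => by rw [hfx x]
  have hI1 : V * I1 = oL ^ (2:ℝ) := by rw [← hI1eq, hflin]
  have hI1' : I1 = V⁻¹ * oL ^ (2:ℝ) := by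
    rw [← hI1, ← mul_assoc, ENNReal.inv_mul_cancel hVne hVtop, one_mul]
  have hoLtop : oL ^ (2:ℝ) ≠ ∞ :=
    ENNReal.rpow_ne_top_of_nonneg (by norm_num) ENNReal.ofReal_ne_top
  have hI1fin : I1 ≠ ∞ := by
    rw [hI1']
    exact ENNReal.mul_ne_top (ENNReal.inv_ne_top.2 hVne) hoLtop
  -- gradient identities
  have hGm : Measurable (Gsq f) := by
    apply Finset.measurable_sum
    intro i _
    exact ((measurable_fderiv_apply_const ℝ f _).norm).pow_const 2
  have hGint : Integrable (Gsq f) volume := by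
    have hfd2 : Integrable (fun x : Euc N => ‖fderiv ℝ f x‖ ^ (2:ℝ)) volume := by
      simpa using hdf2.integrable_norm_rpow two_ne_zero ENNReal.ofNat_ne_top
    have hfd2' : Integrable (fun x : Euc N => 2 * ‖fderiv ℝ f x‖ ^ 2) volume := by
      apply Integrable.const_mul
      have h9 : (fun x : Euc N => ‖fderiv ℝ f x‖ ^ 2)
          = fun x : Euc N => ‖fderiv ℝ f x‖ ^ (2:ℝ) := by
        funext x
        rw [← Real.rpow_natCast ‖fderiv ℝ f x‖ 2]
        norm_num
      rw [h9]; exact hfd2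
    refine hfd2'.mono' hGm.aestronglyMeasurable ?_
    filter_upwards with x
    rw [Real.norm_eq_abs, abs_of_nonneg (Gsq_nonneg f x)]
    exact Gsq_le f x
  have hGlin : ∫⁻ x : Euc N, ENNReal.ofReal (Gsq f x) = ENNReal.ofReal (gradL2norm f ^ 2) := by
    rw [← ofReal_integral_eq_lintegral_ofReal hGint
      (Filter.Eventually.of_forall (Gsq_nonneg f))]
    congr 1
    rw [gradL2norm, Real.sq_sqrt]
    · rfl
    · exact integral_nonneg fun x => by
        have := Gsq_nonneg f x
        simpa [Gsq] using this
  have hoG2 : ENNReal.ofReal (gradL2norm f ^ 2) = oG ^ (2:ℝ) := by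
    rw [hoG, ENNReal.ofReal_rpow_of_nonneg hG0 (by norm_num : (0:ℝ) ≤ 2)]
    congr 1
    rw [← Real.rpow_natCast (gradL2norm f) 2]
    norm_num
  have hI2le : I2 ≤ V⁻¹ * oG ^ (2:ℝ) := by
    have hstep1 : ∀ y : ℝ, (‖g' y‖₊ : ℝ≥0∞) ^ (2:ℝ) ≤ ENNReal.ofReal (Gsq f (y • e₀)) := by
      intro y
      have h1 : ‖g' y‖ ^ 2 ≤ Gsq f (y • e₀) := norm_fderiv_apply_sq_le f (y • e₀) e₀ he1
      calc (‖g' y‖₊ : ℝ≥0∞) ^ (2:ℝ) = ENNReal.ofReal (‖g' y‖ ^ (2:ℝ)) := by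
            rw [← ofReal_norm_eq_coe_nnnorm, ENNReal.ofReal_rpow_of_nonneg (norm_nonneg _)
              (by norm_num)]
        _ ≤ ENNReal.ofReal (Gsq f (y • e₀)) := by
            apply ENNReal.ofReal_le_ofReal
            rw [← Real.rpow_natCast ‖g' y‖ 2] at h1
            exact_mod_cast h1
    have hpolar : ∫⁻ x : Euc N, ENNReal.ofReal (Gsq f x)
        = V * ∫⁻ y in Ioi (0:ℝ), ENNReal.ofReal (y ^ (N-1)) * ENNReal.ofReal (Gsq f (y • e₀)) := by
      have hm : Measurable fun y : ℝ => ENNReal.ofReal (Gsq f (y • e₀)) := by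
        apply ENNReal.measurable_ofReal.comp
        exact hGm.comp ((continuous_id.smul continuous_const).measurable)
      have := lintegral_fun_norm_addHaar' (volume : Measure (Euc N))
        (fun y => ENNReal.ofReal (Gsq f (y • e₀))) hm
      rw [hdim] at this
      rw [← this]
      refine lintegral_congr fun x => ?_
      congr 1
      refine (Gsq_radial f hrad hdf) x (‖x‖ • e₀) ?_
      simp [norm_smul, he1, abs_of_nonneg (norm_nonneg x)]
    calc I2 ≤ ∫⁻ y in Ioi (0:ℝ), ENNReal.ofReal (y ^ (N-1)) * ENNReal.ofReal (Gsq f (y • e₀)) :=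
          lintegral_mono fun y => mul_le_mul_right (hstep1 y) _
      _ = V⁻¹ * (V * ∫⁻ y in Ioi (0:ℝ),
            ENNReal.ofReal (y ^ (N-1)) * ENNReal.ofReal (Gsq f (y • e₀))) := by
          rw [← mul_assoc, ENNReal.inv_mul_cancel hVne hVtop, one_mul]
      _ = V⁻¹ * oG ^ (2:ℝ) := by rw [← hpolar, hGlin, hoG2]
  -- combine Strauss + Hölder
  set M : ℝ≥0∞ := 2 * (I1 ^ (1/2:ℝ) * I2 ^ (1/2:ℝ)) with hM_def
  have hMle : M ≤ W * (oL * oG) := by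
    have e1 : I1 ^ (1/2:ℝ) = (V⁻¹) ^ (1/2:ℝ) * oL := by
      rw [hI1', ENNReal.mul_rpow_of_nonneg _ _ (by norm_num : (0:ℝ) ≤ 1/2)]
      congr 1
      rw [← ENNReal.rpow_mul]
      norm_num
    have e2 : I2 ^ (1/2:ℝ) ≤ (V⁻¹) ^ (1/2:ℝ) * oG := by
      calc I2 ^ (1/2:ℝ) ≤ (V⁻¹ * oG ^ (2:ℝ)) ^ (1/2:ℝ) :=
            ENNReal.rpow_le_rpow hI2le (by norm_num)
        _ = (V⁻¹) ^ (1/2:ℝ) * oG := by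
            rw [ENNReal.mul_rpow_of_nonneg _ _ (by norm_num : (0:ℝ) ≤ 1/2)]
            congr 1
            rw [← ENNReal.rpow_mul]
            norm_num
    calc M = 2 * (I1 ^ (1/2:ℝ) * I2 ^ (1/2:ℝ)) := hM_def
      _ ≤ 2 * (((V⁻¹) ^ (1/2:ℝ) * oL) * ((V⁻¹) ^ (1/2:ℝ) * oG)) := by
          exact mul_le_mul_right (mul_le_mul' (le_of_eq e1) e2) 2
      _ = W * (oL * oG) := by
          rw [hW]
          rw [show (V⁻¹) ^ (1/2:ℝ) * oL * ((V⁻¹) ^ (1/2:ℝ) * oG)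
            = ((V⁻¹) ^ (1/2:ℝ) * (V⁻¹) ^ (1/2:ℝ)) * (oL * oG) by ring]
          rw [← ENNReal.rpow_add_of_nonneg _ _ (by norm_num : (0:ℝ) ≤ 1/2)
            (by norm_num : (0:ℝ) ≤ 1/2)]
          norm_num
          rw [mul_assoc]
  have hMtop : M ≠ ∞ := by
    refine ne_top_of_le_ne_top ?_ hMle
    exact ENNReal.mul_ne_top hWtop
      (ENNReal.mul_ne_top ENNReal.ofReal_ne_top ENNReal.ofReal_ne_top)
  set m : ℝ := M.toReal with hm_def
  have hm0 : 0 ≤ m := ENNReal.toReal_nonneg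
  have hMm : M = ENNReal.ofReal m := (ENNReal.ofReal_toReal hMtop).symm
  have hcast : ((N - 1 : ℕ) : ℝ) = (N:ℝ) - 1 := by
    rw [Nat.cast_sub (by omega : 1 ≤ N)]
    norm_num
  have strauss : ∀ r : ℝ, 0 < r → r ^ ((N:ℝ) - 1) * ‖g r‖ ^ (2:ℝ) ≤ m := by
    intro r hr
    have h1 := strauss_aux N hN g g' hg hg'm hI1fin r hr
    have h2 := holder_aux N g g' hgc hg'm r hr
    have h3 : ENNReal.ofReal (r ^ (N-1) * ‖g r‖ ^ 2) ≤ M := by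
      rw [hM_def]
      refine le_trans h1 (mul_le_mul_right ?_ 2)
      exact h2
    rw [hMm] at h3
    have h4 : r ^ (N-1) * ‖g r‖ ^ 2 ≤ m := (ENNReal.ofReal_le_ofReal_iff hm0).1 h3
    calc r ^ ((N:ℝ) - 1) * ‖g r‖ ^ (2:ℝ) = r ^ (N-1) * ‖g r‖ ^ 2 := by
          rw [← hcast, Real.rpow_natCast, ← Real.rpow_natCast ‖g r‖ 2]
          norm_num
      _ ≤ m := h4
  -- final assembly
  set E : ℝ := b - ((N:ℝ) - 1) * (p - 1) / 2 with hE_def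
  have hen : E ≤ 0 := by rw [hE_def]; linarith
  have hEPt : E = b - ((N:ℝ) - 1) * c := by rw [hE_def, hc_def]; ring
  have hnn0 : (0:ℝ) ≤ (N:ℝ) - 1 := by linarith
  have hfm : Measurable f := hdf.continuous.measurable
  have hptwise : ∀ x : Euc N, x ∈ {x : Euc N | R ≤ ‖x‖} →
      (‖x‖₊ : ℝ≥0∞) ^ b * (‖f x‖₊ : ℝ≥0∞) ^ (p + 1)
        ≤ ENNReal.ofReal (R ^ E * m ^ c) * (‖f x‖₊ : ℝ≥0∞) ^ (2:ℝ) := by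
    intro x hx
    have hrR : R ≤ ‖x‖ := hx
    have hr0 : 0 < ‖x‖ := lt_of_lt_of_le hR hrR
    have hcoe : (‖x‖₊ : ℝ≥0∞) = ENNReal.ofReal ‖x‖ := (ofReal_norm_eq_coe_nnnorm x).symm
    have hcf : (‖f x‖₊ : ℝ≥0∞) = ENNReal.ofReal ‖g ‖x‖‖ := by
      rw [hfx x, ofReal_norm_eq_coe_nnnorm]
    have h1 : (‖x‖₊ : ℝ≥0∞) ^ b = ENNReal.ofReal (‖x‖ ^ b) := by
      rw [hcoe, ENNReal.ofReal_rpow_of_pos hr0]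
    have h2 : (‖f x‖₊ : ℝ≥0∞) ^ (p+1) = ENNReal.ofReal (‖g ‖x‖‖ ^ (p+1)) := by
      rw [hcf, ENNReal.ofReal_rpow_of_nonneg (norm_nonneg _) (by linarith)]
    have h3 : (‖f x‖₊ : ℝ≥0∞) ^ (2:ℝ) = ENNReal.ofReal (‖g ‖x‖‖ ^ (2:ℝ)) := by
      rw [hcf, ENNReal.ofReal_rpow_of_nonneg (norm_nonneg _) (by norm_num)]
    rw [h1, h2, h3, ← ENNReal.ofReal_mul (Real.rpow_nonneg (norm_nonneg x) b),
      ← ENNReal.ofReal_mul (by positivity)]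
    apply ENNReal.ofReal_le_ofReal
    have hpc : p + 1 = 2 * c + 2 := by rw [hc_def]; ring
    rw [hpc, mul_assoc]
    have := real_alg (u := ‖g ‖x‖‖) hR hrR hnn0 (norm_nonneg _) hm0 hc0 hb.le
      (by rw [← hpc]; linarith) hEPt hen (strauss ‖x‖ hr0)
    calc ‖x‖ ^ b * ‖g ‖x‖‖ ^ (2 * c + 2) ≤ R ^ E * m ^ c * ‖g ‖x‖‖ ^ (2:ℝ) := this
      _ = R ^ E * (m ^ c * ‖g ‖x‖‖ ^ (2:ℝ)) := by ring
  have hmeas2 : Measurable fun x : Euc N =>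
      ENNReal.ofReal (R ^ E * m ^ c) * (‖f x‖₊ : ℝ≥0∞) ^ (2:ℝ) := by
    fun_prop
  have hreal : R ^ E * m ^ c * L2norm f ^ (2:ℝ)
      ≤ C * R ^ E * gradL2norm f ^ c * L2norm f ^ ((p + 3) / 2) := by
    rcases eq_or_lt_of_le hL0 with hLz | hLpos
    · rw [← hLz, Real.zero_rpow (by norm_num : (2:ℝ) ≠ 0),
        Real.zero_rpow (by positivity : ((p+3)/2 : ℝ) ≠ 0)]
      simp
    · have hmle : m ≤ W.toReal * (L2norm f * gradL2norm f) := by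
        refine le_trans (le_of_eq rfl) ?_
        refine le_trans (ENNReal.toReal_mono (ENNReal.mul_ne_top hWtop
          (ENNReal.mul_ne_top ENNReal.ofReal_ne_top ENNReal.ofReal_ne_top)) hMle)
          (le_of_eq ?_)
        simp [ENNReal.toReal_mul, ENNReal.toReal_ofReal hL0, ENNReal.toReal_ofReal hG0]
      have hmc : m ^ c ≤ C * (L2norm f ^ c * gradL2norm f ^ c) := by
        calc m ^ c ≤ (W.toReal * (L2norm f * gradL2norm f)) ^ c :=
              Real.rpow_le_rpow hm0 hmle hc0
          _ = C * (L2norm f ^ c * gradL2norm f ^ c) := by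
              rw [Real.mul_rpow ENNReal.toReal_nonneg (by positivity),
                Real.mul_rpow hL0 hG0, hC_def]
      have hRE : (0:ℝ) ≤ R ^ E := Real.rpow_nonneg hR.le E
      have hLsq : (0:ℝ) ≤ L2norm f ^ (2:ℝ) := Real.rpow_nonneg hL0 _
      calc R ^ E * m ^ c * L2norm f ^ (2:ℝ)
          ≤ R ^ E * (C * (L2norm f ^ c * gradL2norm f ^ c)) * L2norm f ^ (2:ℝ) := by
            exact mul_le_mul_of_nonneg_right (mul_le_mul_of_nonneg_left hmc hRE) hLsq
        _ = C * R ^ E * gradL2norm f ^ c * (L2norm f ^ c * L2norm f ^ (2:ℝ)) := by ring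
        _ = C * R ^ E * gradL2norm f ^ c * L2norm f ^ ((p + 3) / 2) := by
            rw [← Real.rpow_add hLpos, show c + 2 = (p + 3) / 2 by rw [hc_def]; ring]
  calc (∫⁻ x in {x : Euc N | R ≤ ‖x‖}, (‖x‖₊ : ℝ≥0∞) ^ b * (‖f x‖₊ : ℝ≥0∞) ^ (p + 1))
      ≤ ∫⁻ x in {x : Euc N | R ≤ ‖x‖},
          ENNReal.ofReal (R ^ E * m ^ c) * (‖f x‖₊ : ℝ≥0∞) ^ (2:ℝ) :=
        setLIntegral_mono hmeas2 hptwise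
    _ = ENNReal.ofReal (R ^ E * m ^ c)
        * ∫⁻ x in {x : Euc N | R ≤ ‖x‖}, (‖f x‖₊ : ℝ≥0∞) ^ (2:ℝ) :=
        lintegral_const_mul _ (by fun_prop)
    _ ≤ ENNReal.ofReal (R ^ E * m ^ c) * ∫⁻ x : Euc N, (‖f x‖₊ : ℝ≥0∞) ^ (2:ℝ) :=
        mul_le_mul_right (setLIntegral_le_lintegral _ _) _
    _ = ENNReal.ofReal (R ^ E * m ^ c) * oL ^ (2:ℝ) := by rw [hflin]
    _ = ENNReal.ofReal (R ^ E * m ^ c * L2norm f ^ (2:ℝ)) := by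
        rw [hoL, ENNReal.ofReal_rpow_of_nonneg hL0 (by norm_num : (0:ℝ) ≤ 2),
          ← ENNReal.ofReal_mul (by positivity)]
    _ ≤ ENNReal.ofReal (C * R ^ E * gradL2norm f ^ c * L2norm f ^ ((p + 3) / 2)) :=
        ENNReal.ofReal_le_ofReal hreal
end
end

section
/- Let N ≥ 1 and let φ : ℝ^N → ℂ be differentiable with L = sup_x |∇φ(x)| < ∞ and ∫_{ℝ^N} e^{|y|} |φ(y)|² dy < ∞. Then there exists C > 0 such that e^{|x|} |φ(x)|^{N+2} ≤ C for all x ∈ ℝ^N; in particular |φ(x)| ≤ C' e^{−|x|/(N+2)} for some C' > 0 and all x. -/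
set_option maxHeartbeats 1000000


open MeasureTheory Filter
open scoped ENNReal NNReal BigOperators

noncomputable section

/-- Pointwise exponential decay from an exponentially weighted `L²` bound and a Lipschitz
bound: if `∇φ` is bounded and `∫ e^{|y|}|φ(y)|² dy < ∞`, then `e^{|x|}|φ(x)|^{N+2}` is
bounded, so `|φ(x)| ≲ e^{-|x|/(N+2)}` (part of the proof of Lemma 2.9 of the paper). -/
theorem decay_from_weighted_L2 (N : ℕ) (hN : 1 ≤ N) (φ : Euc N → ℂ)
    (hdiff : Differentiable ℝ φ)
    (hgradbd : ∃ L : ℝ, ∀ x : Euc N, ‖fderiv ℝ φ x‖ ≤ L)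
    (hint : Integrable (fun y : Euc N => Real.exp ‖y‖ * ‖φ y‖ ^ 2)) :
    (∃ C : ℝ, 0 < C ∧ ∀ x : Euc N, Real.exp ‖x‖ * ‖φ x‖ ^ (N + 2) ≤ C) ∧
      ∃ C' : ℝ, 0 < C' ∧ ∀ x : Euc N, ‖φ x‖ ≤ C' * Real.exp (-‖x‖ / ((N : ℝ) + 2)) := by
  obtain ⟨L, hL⟩ := hgradbd
  haveI : Nontrivial (Euc N) := Module.nontrivial_of_finrank_pos (R := ℝ)
    (by rw [finrank_euclideanSpace_fin]; omega)
  set L' : ℝ := max L 1 with hL'def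
  have hL'pos : (0:ℝ) < L' := lt_of_lt_of_le one_pos (le_max_right _ _)
  have hL' : ∀ x : Euc N, ‖fderiv ℝ φ x‖ ≤ L' := fun x => (hL x).trans (le_max_left _ _)
  have hlip : ∀ x y : Euc N, ‖φ y - φ x‖ ≤ L' * ‖y - x‖ := fun x y =>
    Convex.norm_image_sub_le_of_norm_fderiv_le
      (fun z _ => hdiff z) (fun z _ => hL' z) convex_univ (Set.mem_univ x) (Set.mem_univ y)
  set I : ℝ := ∫ y : Euc N, Real.exp ‖y‖ * ‖φ y‖ ^ 2 with hIdef
  have hfnonneg : ∀ y : Euc N, 0 ≤ Real.exp ‖y‖ * ‖φ y‖ ^ 2 :=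
    fun y => mul_nonneg (Real.exp_pos _).le (by positivity)
  have hInonneg : 0 ≤ I := integral_nonneg hfnonneg
  clear_value I
  set c : ℝ := (volume (Metric.ball (0 : Euc N) 1)).toReal with hcdef
  have hcpos : 0 < c := by
    refine ENNReal.toReal_pos ?_ measure_ball_lt_top.ne
    exact (Metric.measure_ball_pos volume 0 one_pos).ne'
  clear_value c
  -- core inequality
  have core : ∀ x : Euc N,
      Real.exp (‖x‖ - 1) * (‖φ x‖ / 2) ^ 2 *
        ((min (‖φ x‖ / (2 * L')) 1) ^ N * c) ≤ I := by
    intro x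
    set a : ℝ := ‖φ x‖ with hadef
    set r : ℝ := min (a / (2 * L')) 1 with hrdef
    rcases eq_or_lt_of_le (norm_nonneg (φ x)) with ha0 | hapos
    · have : a = 0 := ha0.symm
      simp [this, hInonneg]
    have hrpos : 0 < r := lt_min (by positivity) one_pos
    have hr1 : r ≤ 1 := min_le_right _ _
    have hra : r ≤ a / (2 * L') := min_le_left _ _
    have hlow : ∀ y ∈ Metric.ball x r,
        Real.exp (‖x‖ - 1) * (a / 2) ^ 2 ≤ Real.exp ‖y‖ * ‖φ y‖ ^ 2 := by
      intro y hy
      rw [Metric.mem_ball, dist_eq_norm] at hy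
      have hxy : ‖y - x‖ = ‖x - y‖ := norm_sub_rev _ _
      have h1 : ‖x‖ - 1 ≤ ‖y‖ := by
        have h := norm_sub_norm_le x y
        have : ‖y - x‖ < 1 := lt_of_lt_of_le hy hr1
        linarith [hxy ▸ this]
      have h6 : L' * r ≤ a / 2 := by
        calc L' * r ≤ L' * (a / (2 * L')) := mul_le_mul_of_nonneg_left hra hL'pos.le
          _ = a / 2 := by field_simp
      have h2 : a / 2 ≤ ‖φ y‖ := by
        have h3 : ‖φ x - φ y‖ ≤ L' * ‖x - y‖ := by simpa [norm_sub_rev] using hlip y x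
        have h5 : L' * ‖x - y‖ ≤ L' * r := by
          rw [← hxy]; exact mul_le_mul_of_nonneg_left hy.le hL'pos.le
        have h7 : a - ‖φ y‖ ≤ ‖φ x - φ y‖ := by
          have := norm_sub_norm_le (φ x) (φ y); linarith
        linarith
      exact mul_le_mul (Real.exp_le_exp.2 h1) (pow_le_pow_left₀ (by positivity) h2 2)
        (by positivity) (Real.exp_pos _).le
    have hset : Real.exp (‖x‖ - 1) * (a / 2) ^ 2 * (volume (Metric.ball x r)).toReal
        ≤ ∫ y in Metric.ball x r, Real.exp ‖y‖ * ‖φ y‖ ^ 2 :=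
      setIntegral_ge_of_const_le_real measurableSet_ball measure_ball_lt_top.ne hlow
        hint.integrableOn
    have hsetle : ∫ y in Metric.ball x r, Real.exp ‖y‖ * ‖φ y‖ ^ 2 ≤ I := by
      rw [hIdef]
      exact setIntegral_le_integral hint (Filter.Eventually.of_forall hfnonneg)
    have htr : (volume (Metric.ball x r)).toReal = r ^ N * c := by
      rw [Measure.addHaar_ball volume x hrpos.le, finrank_euclideanSpace_fin,
        ENNReal.toReal_mul, ENNReal.toReal_ofReal (by positivity), ← hcdef]
    rw [htr] at hset
    linarith
  -- boundedness of φ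
  set M : ℝ := max (2 * L') (2 * Real.sqrt (Real.exp 1 * I / c)) with hMdef
  have hMpos : 0 < M := lt_of_lt_of_le (by linarith) (le_max_left _ _)
  have hbd : ∀ x : Euc N, ‖φ x‖ ≤ M := by
    intro x
    by_contra hcon
    push_neg at hcon
    set a : ℝ := ‖φ x‖ with hadef
    have h2L : 2 * L' < a := lt_of_le_of_lt (le_max_left _ _) hcon
    have hsq : Real.sqrt (Real.exp 1 * I / c) < a / 2 := by
      have := lt_of_le_of_lt (le_max_right (2*L') _) hcon
      linarith
    have hrmin : min (a / (2 * L')) 1 = 1 := by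
      rw [min_eq_right]; rw [le_div_iff₀ (by positivity)]; linarith
    have hcore := core x
    rw [← hadef, hrmin, one_pow, one_mul] at hcore
    have hex : Real.exp (-1 : ℝ) ≤ Real.exp (‖x‖ - 1) :=
      Real.exp_le_exp.2 (by linarith [norm_nonneg x])
    rw [mul_assoc] at hcore
    have key : Real.exp (-1 : ℝ) * ((a / 2) ^ 2 * c) ≤ I :=
      le_trans (mul_le_mul_of_nonneg_right hex (by positivity)) hcore
    have hee : Real.exp (-1 : ℝ) * Real.exp 1 = 1 := by
      rw [← Real.exp_add]; norm_num
    have hIc : Real.exp 1 * I / c < (a / 2) ^ 2 := by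
      have h0 : 0 ≤ Real.exp 1 * I / c := by positivity
      calc Real.exp 1 * I / c = Real.sqrt (Real.exp 1 * I / c) ^ 2 := (Real.sq_sqrt h0).symm
        _ < (a / 2) ^ 2 := by
            apply pow_lt_pow_left₀ hsq (Real.sqrt_nonneg _)
            norm_num
    have hfin : (a / 2) ^ 2 * c ≤ Real.exp 1 * I := by
      have h := mul_le_mul_of_nonneg_left key (Real.exp_pos 1).le
      calc (a / 2) ^ 2 * c
          = Real.exp 1 * (Real.exp (-1 : ℝ) * ((a / 2) ^ 2 * c)) := by
            rw [← mul_assoc, mul_comm (Real.exp 1), hee, one_mul]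
        _ ≤ Real.exp 1 * I := h
    rw [div_lt_iff₀ hcpos] at hIc
    linarith
  -- main bound
  set L'' : ℝ := max L' (M / 2) with hL''def
  have hL''pos : 0 < L'' := lt_of_lt_of_le hL'pos (le_max_left _ _)
  set K : ℝ := (2 * L'') ^ N with hKdef
  have hKpos : 0 < K := by positivity
  set C₀ : ℝ := 4 * K * Real.exp 1 * I / c with hC0def
  set C : ℝ := max C₀ 1 with hCdef
  have hCpos : 0 < C := lt_of_lt_of_le one_pos (le_max_right _ _)
  have hmain : ∀ x : Euc N, Real.exp ‖x‖ * ‖φ x‖ ^ (N + 2) ≤ C := by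
    intro x
    set a : ℝ := ‖φ x‖ with hadef
    have haM : a ≤ M := hbd x
    have hanon : 0 ≤ a := norm_nonneg _
    have hrge : a / (2 * L'') ≤ min (a / (2 * L')) 1 := by
      refine le_min ?_ ?_
      · apply div_le_div_of_nonneg_left hanon (by positivity)
        have : L' ≤ L'' := le_max_left _ _
        linarith
      · rw [div_le_one (by positivity)]
        have : M / 2 ≤ L'' := le_max_right _ _
        linarith
    have hcore := core x
    rw [← hadef] at hcore
    have hstep : Real.exp (‖x‖ - 1) * (a / 2) ^ 2 * ((a / (2 * L'')) ^ N * c) ≤ I := by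
      refine le_trans ?_ hcore
      gcongr
    have hEq : Real.exp (‖x‖ - 1) * (a / 2) ^ 2 * ((a / (2 * L'')) ^ N * c)
        = Real.exp ‖x‖ / Real.exp 1 * (a ^ (N + 2) * c) / (4 * K) := by
      rw [Real.exp_sub, div_pow, div_pow, hKdef]
      field_simp
      ring
    rw [hEq, div_le_iff₀ (by positivity)] at hstep
    have hgoal : Real.exp ‖x‖ * a ^ (N + 2) ≤ C₀ := by
      rw [hC0def, le_div_iff₀ hcpos]
      have hepos := Real.exp_pos (1:ℝ)
      have h2 := mul_le_mul_of_nonneg_left hstep hepos.le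
      calc Real.exp ‖x‖ * a ^ (N + 2) * c
          = Real.exp 1 * (Real.exp ‖x‖ / Real.exp 1 * (a ^ (N + 2) * c)) := by
            field_simp
        _ ≤ Real.exp 1 * (I * (4 * K)) := h2
        _ = 4 * K * Real.exp 1 * I := by ring
    exact hgoal.trans (le_max_left _ _)
  refine ⟨⟨C, hCpos, hmain⟩, ?_⟩
  refine ⟨C ^ (((N : ℝ) + 2)⁻¹), Real.rpow_pos_of_pos hCpos _, ?_⟩
  intro x
  set a : ℝ := ‖φ x‖ with hadef
  have hanon : 0 ≤ a := norm_nonneg _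
  have hxp : ((N : ℝ) + 2) ≠ 0 := by positivity
  have h1 : a ^ (N + 2) ≤ C * Real.exp (-‖x‖) := by
    rw [Real.exp_neg, ← div_eq_mul_inv, le_div_iff₀ (Real.exp_pos _)]
    have := hmain x
    nlinarith [Real.exp_pos ‖x‖]
  have h2 : a = (a ^ (N + 2) : ℝ) ^ (((N : ℝ) + 2)⁻¹) := by
    rw [← Real.rpow_natCast a (N + 2), ← Real.rpow_mul hanon]
    push_cast
    rw [mul_inv_cancel₀ hxp, Real.rpow_one]
  rw [h2]
  have h3 : (a ^ (N + 2) : ℝ) ^ (((N : ℝ) + 2)⁻¹)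
      ≤ (C * Real.exp (-‖x‖)) ^ (((N : ℝ) + 2)⁻¹) :=
    Real.rpow_le_rpow (by positivity) h1 (by positivity)
  refine h3.trans (le_of_eq ?_)
  rw [Real.mul_rpow hCpos.le (Real.exp_pos _).le, ← Real.exp_mul, div_eq_mul_inv]
end
end
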